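/- arXiv:1903.04286 — 10 statements merged into one kernel-verified Lean document; each statement's English description precedes it below -/
import Mathlib

section
/- For every integer n with 4 ≤ n ≤ 6, the general position number of the Kneser graph K(n,2) equals 6. -/
set_option maxRecDepth 2000
set_option synthInstance.maxSize 10000
set_option synthInstance.maxHeartbeats 2000000

namespace SimpleGraph

variable {V : Type*}

/-- `S` is a general position set of `G`: no vertex of `S` lies on a geodesic
(shortest path) between two other vertices of `S`. -/
def IsGPSet (G : SimpleGraph V) (S : Set V) : Prop :=
  ∀ ⦃u v w : V⦄, u ∈ S → v ∈ S → w ∈ S → u ≠ v → u ≠ w → v ≠ w →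
    ∀ p : G.Walk u v, p.IsPath → p.length = G.dist u v → w ∉ p.support

/-- The general position number of `G`: the maximum cardinality of a general
position set of `G`. -/
noncomputable def gpNumber (G : SimpleGraph V) : ℕ :=
  sSup {n | ∃ S : Set V, G.IsGPSet S ∧ n = S.ncard}

/-- `ρ(G)`: the maximum number of vertices in a union of pairwise independent
complete subgraphs of `G`, where complete subgraphs `Q`, `Q'` are independent
if `d_G(u,u') ≥ 2` for every `u ∈ Q` and `u' ∈ Q'`. -/
noncomputable def rho (G : SimpleGraph V) : ℕ :=
  sSup {n | ∃ 𝒬 : Finset (Finset V),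
    (∀ Q ∈ 𝒬, G.IsClique (Q : Set V)) ∧
    (∀ Q ∈ 𝒬, ∀ Q' ∈ 𝒬, Q ≠ Q' → ∀ u ∈ Q, ∀ u' ∈ Q', 2 ≤ G.edist u u') ∧
    n = (⋃ Q ∈ 𝒬, (Q : Set V)).ncard}

/-- A graph is complete multipartite iff non-adjacency is transitive. -/
def IsCompleteMultipartite' (G : SimpleGraph V) : Prop := Transitive (¬G.Adj · ·)

/-- `η(G)`: the maximum order of an induced complete multipartite subgraph of
the complement of `G`. -/
noncomputable def eta (G : SimpleGraph V) : ℕ :=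
  sSup {n | ∃ B : Set V, (Gᶜ.induce B).IsCompleteMultipartite' ∧ n = B.ncard}

/-- An independent set of a graph. -/
def IsIndepSet' (G : SimpleGraph V) (S : Set V) : Prop :=
  S.Pairwise fun u v => ¬ G.Adj u v

/-- The independence number `α(G)`. -/
noncomputable def indepNum' (G : SimpleGraph V) : ℕ :=
  sSup {n | ∃ S : Set V, G.IsIndepSet' S ∧ n = S.ncard}

end SimpleGraph

/-- The Kneser graph `K(n,k)`: vertices are the `k`-element subsets of an
`n`-element set, two vertices adjacent iff the corresponding sets are disjoint. -/
def kneserGraph (n k : ℕ) : SimpleGraph {s : Finset (Fin n) // s.card = k} where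
  Adj a b := Disjoint a.1 b.1 ∧ a ≠ b
  symm := by
    constructor
    rintro a b ⟨h1, h2⟩
    exact ⟨h1.symm, h2.symm⟩
  loopless := by
    constructor
    rintro a ⟨-, h⟩
    exact h rfl

section Aux

open SimpleGraph

abbrev KV (n : ℕ) := {s : Finset (Fin n) // s.card = 2}
instance (n k : ℕ) : DecidableRel (kneserGraph n k).Adj :=
  fun a b => inferInstanceAs (Decidable (Disjoint a.1 b.1 ∧ a ≠ b))
def kkey {n : ℕ} (v : KV n) : ℕ := ∑ i ∈ v.1, 2 ^ i.val
abbrev P3 {n : ℕ} (u v w : KV n) : Prop :=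
  (kneserGraph n 2).Adj u w ∧ (kneserGraph n 2).Adj w v → (kneserGraph n 2).Adj u v
abbrev C3 {n : ℕ} (x y z : KV n) : Prop := P3 x y z ∧ P3 x z y ∧ P3 y z x

set_option maxHeartbeats 4000000 in
set_option synthInstance.maxSize 10000 in
set_option synthInstance.maxHeartbeats 2000000 in
lemma ub5 :
    ∀ a b : KV 5, kkey a < kkey b →
    ∀ c : KV 5, kkey b < kkey c →
      C3 a b c →
    ∀ d : KV 5, kkey c < kkey d →
      C3 a b d → C3 a c d → C3 b c d →
    ∀ e : KV 5, kkey d < kkey e →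
      C3 a b e → C3 a c e → C3 a d e → C3 b c e → C3 b d e → C3 c d e →
    ∀ f : KV 5, kkey e < kkey f →
      C3 a b f → C3 a c f → C3 a d f → C3 a e f → C3 b c f → C3 b d f → C3 b e f → C3 c d f → C3 c e f → C3 d e f →
    ∀ g : KV 5, kkey f < kkey g →
      C3 a b g → C3 a c g → C3 a d g → C3 a e g → C3 a f g → C3 b c g → C3 b d g → C3 b e g → C3 b f g → C3 c d g → C3 c e g → C3 c f g → C3 d e g → C3 d f g → C3 e f g →
    False := by decide
set_option maxHeartbeats 4000000 in
set_option synthInstance.maxSize 10000 in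
set_option synthInstance.maxHeartbeats 2000000 in
lemma ub6 :
    ∀ a b : KV 6, kkey a < kkey b →
    ∀ c : KV 6, kkey b < kkey c →
      C3 a b c →
    ∀ d : KV 6, kkey c < kkey d →
      C3 a b d → C3 a c d → C3 b c d →
    ∀ e : KV 6, kkey d < kkey e →
      C3 a b e → C3 a c e → C3 a d e → C3 b c e → C3 b d e → C3 c d e →
    ∀ f : KV 6, kkey e < kkey f →
      C3 a b f → C3 a c f → C3 a d f → C3 a e f → C3 b c f → C3 b d f → C3 b e f → C3 c d f → C3 c e f → C3 d e f →
    ∀ g : KV 6, kkey f < kkey g →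
      C3 a b g → C3 a c g → C3 a d g → C3 a e g → C3 a f g → C3 b c g → C3 b d g → C3 b e g → C3 b f g → C3 c d g → C3 c e g → C3 c f g → C3 d e g → C3 d f g → C3 e f g →
    False := by decide

set_option maxHeartbeats 2000000 in
lemma card_le_six {n : ℕ} (hinj : Function.Injective (kkey (n := n)))
    (hub : ∀ a b : KV n, kkey a < kkey b →
      ∀ c : KV n, kkey b < kkey c → C3 a b c →
      ∀ d : KV n, kkey c < kkey d → C3 a b d → C3 a c d → C3 b c d →
      ∀ e : KV n, kkey d < kkey e →
        C3 a b e → C3 a c e → C3 a d e → C3 b c e → C3 b d e → C3 c d e →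
      ∀ f : KV n, kkey e < kkey f →
        C3 a b f → C3 a c f → C3 a d f → C3 a e f → C3 b c f → C3 b d f → C3 b e f →
        C3 c d f → C3 c e f → C3 d e f →
      ∀ g : KV n, kkey f < kkey g →
        C3 a b g → C3 a c g → C3 a d g → C3 a e g → C3 a f g → C3 b c g → C3 b d g →
        C3 b e g → C3 b f g → C3 c d g → C3 c e g → C3 c f g → C3 d e g → C3 d f g →
        C3 e f g →
      False)
    (S : Set (KV n))
    (hC : ∀ ⦃u v w : KV n⦄, u ∈ S → v ∈ S → w ∈ S → u ≠ v → u ≠ w → v ≠ w →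
      (kneserGraph n 2).Adj u w → (kneserGraph n 2).Adj w v → (kneserGraph n 2).Adj u v) :
    S.ncard ≤ 6 := by
  classical
  by_contra hcard
  push_neg at hcard
  have h7 : 7 ≤ S.toFinset.card := by
    rw [← Set.ncard_eq_toFinset_card' S]; omega
  obtain ⟨T, hTS, hT7⟩ := Finset.exists_subset_card_eq h7
  let r : KV n → KV n → Prop := fun x y => kkey x ≤ kkey y
  haveI : DecidableRel r := fun a b => inferInstanceAs (Decidable (_ ≤ _))
  haveI : IsTrans (KV n) r := ⟨fun _ _ _ => Nat.le_trans⟩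
  haveI : IsAntisymm (KV n) r := ⟨fun _ _ h1 h2 => hinj (Nat.le_antisymm h1 h2)⟩
  haveI : IsTotal (KV n) r := ⟨fun a b => Nat.le_total _ _⟩
  set l := T.sort r with hl
  have hlen : l.length = 7 := by rw [hl, Finset.length_sort, hT7]
  set ai : Fin 7 → KV n := fun i => l.get (Fin.cast hlen.symm i) with hai
  have hmem : ∀ i, ai i ∈ S := by
    intro i
    have h1 : ai i ∈ l := l.get_mem _
    rw [hl, Finset.mem_sort] at h1
    have h2 := hTS h1
    rwa [Set.mem_toFinset] at h2
  have key : ∀ i j : Fin 7, i < j → kkey (ai i) < kkey (ai j) := by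
    intro i j hij
    have hle : r (ai i) (ai j) := by
      apply (T.pairwise_sort r).rel_get_of_lt
      rw [Fin.lt_def, Fin.coe_cast, Fin.coe_cast]
      exact hij
    have hne : ai i ≠ ai j := by
      intro h
      have h2 := ((T.sort_nodup r).get_inj_iff).mp h
      have h3 := congrArg Fin.val h2
      rw [Fin.coe_cast, Fin.coe_cast] at h3
      have : i = j := Fin.ext h3
      exact absurd this (Fin.ne_of_lt hij)
    exact lt_of_le_of_ne hle fun h => hne (hinj h)
  have hne : ∀ i j : Fin 7, i ≠ j → ai i ≠ ai j := by
    intro i j hij h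
    rcases lt_or_gt_of_ne hij with h' | h'
    · exact absurd (congrArg kkey h) (Nat.ne_of_lt (key i j h'))
    · exact absurd (congrArg kkey h.symm) (Nat.ne_of_lt (key j i h'))
  have c3 : ∀ i j k : Fin 7, i ≠ j → i ≠ k → j ≠ k → C3 (ai i) (ai j) (ai k) := by
    intro i j k hij hik hjk
    refine ⟨fun ⟨ha, hb⟩ => hC (hmem i) (hmem j) (hmem k) (hne i j hij) (hne i k hik)
      (hne j k hjk) ha hb, fun ⟨ha, hb⟩ => hC (hmem i) (hmem k) (hmem j) (hne i k hik)
      (hne i j hij) (Ne.symm (hne j k hjk)) ha hb, fun ⟨ha, hb⟩ => hC (hmem j) (hmem k)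
      (hmem i) (hne j k hjk) (Ne.symm (hne i j hij)) (Ne.symm (hne i k hik)) ha hb⟩
  exact hub (ai 0) (ai 1) (key 0 1 (by decide))
    (ai 2) (key 1 2 (by decide))
    (c3 0 1 2 (by decide) (by decide) (by decide))
    (ai 3) (key 2 3 (by decide))
    (c3 0 1 3 (by decide) (by decide) (by decide))
    (c3 0 2 3 (by decide) (by decide) (by decide))
    (c3 1 2 3 (by decide) (by decide) (by decide))
    (ai 4) (key 3 4 (by decide))
    (c3 0 1 4 (by decide) (by decide) (by decide))
    (c3 0 2 4 (by decide) (by decide) (by decide))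
    (c3 0 3 4 (by decide) (by decide) (by decide))
    (c3 1 2 4 (by decide) (by decide) (by decide))
    (c3 1 3 4 (by decide) (by decide) (by decide))
    (c3 2 3 4 (by decide) (by decide) (by decide))
    (ai 5) (key 4 5 (by decide))
    (c3 0 1 5 (by decide) (by decide) (by decide))
    (c3 0 2 5 (by decide) (by decide) (by decide))
    (c3 0 3 5 (by decide) (by decide) (by decide))
    (c3 0 4 5 (by decide) (by decide) (by decide))
    (c3 1 2 5 (by decide) (by decide) (by decide))
    (c3 1 3 5 (by decide) (by decide) (by decide))
    (c3 1 4 5 (by decide) (by decide) (by decide))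
    (c3 2 3 5 (by decide) (by decide) (by decide))
    (c3 2 4 5 (by decide) (by decide) (by decide))
    (c3 3 4 5 (by decide) (by decide) (by decide))
    (ai 6) (key 5 6 (by decide))
    (c3 0 1 6 (by decide) (by decide) (by decide))
    (c3 0 2 6 (by decide) (by decide) (by decide))
    (c3 0 3 6 (by decide) (by decide) (by decide))
    (c3 0 4 6 (by decide) (by decide) (by decide))
    (c3 0 5 6 (by decide) (by decide) (by decide))
    (c3 1 2 6 (by decide) (by decide) (by decide))
    (c3 1 3 6 (by decide) (by decide) (by decide))
    (c3 1 4 6 (by decide) (by decide) (by decide))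
    (c3 1 5 6 (by decide) (by decide) (by decide))
    (c3 2 3 6 (by decide) (by decide) (by decide))
    (c3 2 4 6 (by decide) (by decide) (by decide))
    (c3 2 5 6 (by decide) (by decide) (by decide))
    (c3 3 4 6 (by decide) (by decide) (by decide))
    (c3 3 5 6 (by decide) (by decide) (by decide))
    (c3 4 5 6 (by decide) (by decide) (by decide))


lemma dist_eq_two_aux {V : Type*} (G : SimpleGraph V) {u v w : V} (huv : u ≠ v)
    (hna : ¬ G.Adj u v) (h1 : G.Adj u w) (h2 : G.Adj w v) : G.dist u v = 2 := by
  have hle : G.dist u v ≤ 2 := by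
    have := G.dist_le (SimpleGraph.Walk.cons h1 (SimpleGraph.Walk.cons h2 SimpleGraph.Walk.nil))
    simpa using this
  have hpos : 0 < G.dist u v :=
    (SimpleGraph.Walk.cons h1 (SimpleGraph.Walk.cons h2 SimpleGraph.Walk.nil)).reachable.pos_dist_of_ne huv
  have hne1 : G.dist u v ≠ 1 := fun h => hna ((dist_eq_one_iff_adj (G:=G)).mp h)
  omega

lemma gp_char {V : Type*} (G : SimpleGraph V)
    (H2 : ∀ u v : V, u ≠ v → ¬G.Adj u v → ∃ w, G.Adj u w ∧ G.Adj w v) (S : Set V) :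
    G.IsGPSet S ↔ ∀ ⦃u v w : V⦄, u ∈ S → v ∈ S → w ∈ S → u ≠ v → u ≠ w → v ≠ w →
      G.Adj u w → G.Adj w v → G.Adj u v := by
  constructor
  · intro hgp u v w hu hv hw huv huw hvw h1 h2
    by_contra hna
    have hd : G.dist u v = 2 := dist_eq_two_aux G huv hna h1 h2
    set p : G.Walk u v := SimpleGraph.Walk.cons h1 (SimpleGraph.Walk.cons h2 SimpleGraph.Walk.nil) with hp
    have hpath : p.IsPath := by
      simp [hp, SimpleGraph.Walk.isPath_def, huw, huv, hvw, Ne.symm hvw]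
    have hlen : p.length = G.dist u v := by simp [hp, hd]
    have := hgp hu hv hw huv huw hvw p hpath hlen
    simp [hp] at this
  · intro h u v w hu hv hw huv huw hvw p hpath hlen hmem
    by_cases hadj : G.Adj u v
    · have hd : G.dist u v = 1 := (dist_eq_one_iff_adj (G:=G)).mpr hadj
      rw [hd] at hlen
      cases p with
      | nil => simp at hlen
      | cons h1 q =>
        cases q with
        | nil =>
          simp [SimpleGraph.Walk.support_cons] at hmem
          rcases hmem with h' | h'
          · exact huw h'.symm
          · exact hvw h'.symm
        | cons h2 r => simp [SimpleGraph.Walk.length_cons] at hlen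
    · obtain ⟨x, hx1, hx2⟩ := H2 u v huv hadj
      have hd : G.dist u v = 2 := dist_eq_two_aux G huv hadj hx1 hx2
      rw [hd] at hlen
      cases p with
      | nil => simp at hlen
      | cons h1 q =>
        cases q with
        | nil => simp at hlen
        | cons h2 r =>
          cases r with
          | nil =>
            simp [SimpleGraph.Walk.support_cons] at hmem
            rcases hmem with h' | h' | h'
            · exact huw h'.symm
            · subst h'
              exact hadj (h hu hv hw huv huw hvw h1 h2)
            · exact hvw h'.symm
          | cons h3 s => simp [SimpleGraph.Walk.length_cons] at hlen


/-- The general position witness in `K(n,2)`: all six `2`-subsets of `{0, 1, 2, 3}`. -/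
def W5 : Finset (KV 5) :=
  {⟨({0, 1} : Finset (Fin 5)), by decide⟩, ⟨({0, 2} : Finset (Fin 5)), by decide⟩,
   ⟨({0, 3} : Finset (Fin 5)), by decide⟩, ⟨({1, 2} : Finset (Fin 5)), by decide⟩,
   ⟨({1, 3} : Finset (Fin 5)), by decide⟩, ⟨({2, 3} : Finset (Fin 5)), by decide⟩}

def W6 : Finset (KV 6) :=
  {⟨({0, 1} : Finset (Fin 6)), by decide⟩, ⟨({0, 2} : Finset (Fin 6)), by decide⟩,
   ⟨({0, 3} : Finset (Fin 6)), by decide⟩, ⟨({1, 2} : Finset (Fin 6)), by decide⟩,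
   ⟨({1, 3} : Finset (Fin 6)), by decide⟩, ⟨({2, 3} : Finset (Fin 6)), by decide⟩}

lemma wit5 : ∀ u v w : KV 5, u ∈ W5 → v ∈ W5 → w ∈ W5 → u ≠ v → u ≠ w → v ≠ w →
    (kneserGraph 5 2).Adj u w → (kneserGraph 5 2).Adj w v → (kneserGraph 5 2).Adj u v := by
  decide

lemma wit6 : ∀ u v w : KV 6, u ∈ W6 → v ∈ W6 → w ∈ W6 → u ≠ v → u ≠ w → v ≠ w →
    (kneserGraph 6 2).Adj u w → (kneserGraph 6 2).Adj w v → (kneserGraph 6 2).Adj u v := by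
  decide

lemma w5card : W5.card = 6 := by decide

lemma w6card : W6.card = 6 := by decide

lemma H2_5 : ∀ u v : KV 5, u ≠ v → ¬(kneserGraph 5 2).Adj u v →
    ∃ w, (kneserGraph 5 2).Adj u w ∧ (kneserGraph 5 2).Adj w v := by decide

lemma H2_6 : ∀ u v : KV 6, u ≠ v → ¬(kneserGraph 6 2).Adj u v →
    ∃ w, (kneserGraph 6 2).Adj u w ∧ (kneserGraph 6 2).Adj w v := by decide

lemma kinj5 : Function.Injective (kkey (n := 5)) := by
  intro a b
  revert a b
  decide

lemma kinj6 : Function.Injective (kkey (n := 6)) := by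
  intro a b
  revert a b
  decide

end Aux

/-- For every integer `n` with `4 ≤ n ≤ 6`, the general position number of the
Kneser graph `K(n,2)` equals `6`. -/
theorem gpNumber_kneserGraph_two_of_le_six (n : ℕ) (h4 : 4 ≤ n) (h6 : n ≤ 6) :
    (kneserGraph n 2).gpNumber = 6 := by
  unfold SimpleGraph.gpNumber
  interval_cases n
  · -- n = 4
    have hdeg : ∀ a b c : KV 4, (kneserGraph 4 2).Adj a b → (kneserGraph 4 2).Adj a c →
        b = c := by decide
    have hgp : (kneserGraph 4 2).IsGPSet Set.univ := by
      intro u v w _ _ _ huv huw hvw p hpath hlen hmem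
      cases p with
      | nil => exact huv rfl
      | cons h1 q =>
        cases q with
        | nil =>
          simp [SimpleGraph.Walk.support_cons] at hmem
          rcases hmem with h' | h'
          · exact huw h'.symm
          · exact hvw h'.symm
        | cons h2 r =>
          rw [SimpleGraph.Walk.cons_isPath_iff] at hpath
          rename_i x y
          have huy : u = y := hdeg x u y h1.symm h2
          apply hpath.2
          rw [SimpleGraph.Walk.support_cons, huy]
          exact List.mem_cons_of_mem _ r.start_mem_support
    have hcard : (Set.univ : Set (KV 4)).ncard = 6 := by
      rw [Set.ncard_univ, Nat.card_eq_fintype_card]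
      decide
    have hub : ∀ m ∈ {m | ∃ S : Set (KV 4), (kneserGraph 4 2).IsGPSet S ∧ m = S.ncard},
        m ≤ 6 := by
      rintro m ⟨S, _, rfl⟩
      calc S.ncard ≤ (Set.univ : Set (KV 4)).ncard :=
            Set.ncard_le_ncard (Set.subset_univ S) Set.finite_univ
        _ = 6 := hcard
    have hwit : 6 ∈ {m | ∃ S : Set (KV 4), (kneserGraph 4 2).IsGPSet S ∧ m = S.ncard} :=
      ⟨Set.univ, hgp, hcard.symm⟩
    exact le_antisymm (csSup_le ⟨6, hwit⟩ hub) (le_csSup ⟨6, hub⟩ hwit)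
  · -- n = 5
    have hchar := gp_char (kneserGraph 5 2) H2_5
    have hub : ∀ m ∈ {m | ∃ S : Set (KV 5), (kneserGraph 5 2).IsGPSet S ∧ m = S.ncard},
        m ≤ 6 := by
      rintro m ⟨S, hS, rfl⟩
      exact card_le_six kinj5 ub5 S ((hchar S).mp hS)
    have hwit : 6 ∈ {m | ∃ S : Set (KV 5), (kneserGraph 5 2).IsGPSet S ∧ m = S.ncard} := by
      refine ⟨↑W5, (hchar _).mpr ?_, ?_⟩
      · intro u v w hu hv hw
        exact wit5 u v w (Finset.mem_coe.mp hu) (Finset.mem_coe.mp hv) (Finset.mem_coe.mp hw)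
      · rw [Set.ncard_coe_finset, w5card]
    exact le_antisymm (csSup_le ⟨6, hwit⟩ hub) (le_csSup ⟨6, hub⟩ hwit)
  · -- n = 6
    have hchar := gp_char (kneserGraph 6 2) H2_6
    have hub : ∀ m ∈ {m | ∃ S : Set (KV 6), (kneserGraph 6 2).IsGPSet S ∧ m = S.ncard},
        m ≤ 6 := by
      rintro m ⟨S, hS, rfl⟩
      exact card_le_six kinj6 ub6 S ((hchar S).mp hS)
    have hwit : 6 ∈ {m | ∃ S : Set (KV 6), (kneserGraph 6 2).IsGPSet S ∧ m = S.ncard} := by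
      refine ⟨↑W6, (hchar _).mpr ?_, ?_⟩
      · intro u v w hu hv hw
        exact wit6 u v w (Finset.mem_coe.mp hu) (Finset.mem_coe.mp hv) (Finset.mem_coe.mp hw)
      · rw [Set.ncard_coe_finset, w6card]
    exact le_antisymm (csSup_le ⟨6, hwit⟩ hub) (le_csSup ⟨6, hub⟩ hwit)
end

section
/- For every integer n ≥ 7, the general position number of the Kneser graph K(n,2) equals n − 1. -/
section Aux
open Finset in

private lemma pair_of_mem_card_two {α : Type*} [DecidableEq α] {e : Finset α} (he : e.card = 2)
    {x : α} (hx : x ∈ e) : ∃ y, y ≠ x ∧ e = {x, y} := by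
  have h1 : (e.erase x).card = 1 := by rw [Finset.card_erase_of_mem hx, he]
  obtain ⟨y, hy⟩ := Finset.card_eq_one.mp h1
  refine ⟨y, ?_, ?_⟩
  · have : y ∈ e.erase x := hy ▸ Finset.mem_singleton_self y
    exact (Finset.mem_erase.mp this).1
  · rw [← Finset.insert_erase hx, hy]

private lemma eq_pair_of_two_mem {α : Type*} [DecidableEq α] {e : Finset α} (he : e.card = 2)
    {x y : α} (hx : x ∈ e) (hy : y ∈ e) (hxy : x ≠ y) : e = {x, y} := by
  have hsub : ({x, y} : Finset α) ⊆ e := by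
    intro z hz
    rcases Finset.mem_insert.mp hz with rfl | hz
    · exact hx
    · exact (Finset.mem_singleton.mp hz) ▸ hy
  exact (Finset.eq_of_subset_of_card_le hsub (by rw [he, Finset.card_pair hxy])).symm

private lemma key {n : ℕ} (hn : 7 ≤ n) (E : Finset (Finset (Fin n)))
    (h2 : ∀ e ∈ E, e.card = 2)
    (hP : ∀ a ∈ E, ∀ b ∈ E, ∀ c ∈ E, a ≠ b → c ≠ a → c ≠ b →
      ¬ Disjoint a b → Disjoint a c → Disjoint b c → False) :
    E.card ≤ n - 1 := by
  classical
  by_contra hcon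
  push_neg at hcon
  have hE : n ≤ E.card := by omega
  set d : Fin n → ℕ := fun x => (E.filter (fun e => x ∈ e)).card with hd
  by_cases h3 : ∃ x, 3 ≤ d x
  · obtain ⟨x, hx3⟩ := h3
    set F := E.filter (fun e => x ∈ e) with hF
    by_cases hall : ∀ e ∈ E, x ∈ e
    · have hsub : E ⊆ (Finset.univ.erase x).image (fun y => ({x, y} : Finset (Fin n))) := by
        intro e he
        obtain ⟨y, hyx, hey⟩ := pair_of_mem_card_two (h2 e he) (hall e he)
        exact Finset.mem_image.mpr ⟨y, Finset.mem_erase.mpr ⟨hyx, Finset.mem_univ y⟩, hey.symm⟩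
      have hb := (Finset.card_le_card hsub).trans Finset.card_image_le
      rw [Finset.card_erase_of_mem (Finset.mem_univ x), Finset.card_univ, Fintype.card_fin] at hb
      omega
    · push_neg at hall
      -- at most one edge at x disjoint from any non-x edge
      have hFd : ∀ e ∈ E, x ∉ e → (F.filter (fun f => Disjoint f e)).card ≤ 1 := by
        intro e he hxe
        by_contra hc
        have hgt : 1 < (F.filter (fun f => Disjoint f e)).card := by omega
        obtain ⟨f₁, hf₁, f₂, hf₂, hne⟩ := Finset.one_lt_card.mp hgt
        obtain ⟨hf₁F, hdf₁⟩ := Finset.mem_filter.mp hf₁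
        obtain ⟨hf₂F, hdf₂⟩ := Finset.mem_filter.mp hf₂
        obtain ⟨hf₁E, hxf₁⟩ := Finset.mem_filter.mp hf₁F
        obtain ⟨hf₂E, hxf₂⟩ := Finset.mem_filter.mp hf₂F
        exact hP f₁ hf₁E f₂ hf₂E e he hne (fun h => hxe (h ▸ hxf₁)) (fun h => hxe (h ▸ hxf₂))
          (Finset.not_disjoint_iff.mpr ⟨x, hxf₁, hxf₂⟩) hdf₁ hdf₂
      -- edges at x meeting a non-x edge e are of the form {x,y}, y ∈ e
      have hFm : ∀ e ∈ E, x ∉ e →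
          F.filter (fun f => ¬ Disjoint f e) ⊆ e.image (fun y => ({x, y} : Finset (Fin n))) := by
        intro e he hxe f hf
        obtain ⟨hfF, hndf⟩ := Finset.mem_filter.mp hf
        obtain ⟨hfE, hxf⟩ := Finset.mem_filter.mp hfF
        obtain ⟨y, hyf, hye⟩ := Finset.not_disjoint_iff.mp hndf
        have hxy : x ≠ y := fun h => hxe (h ▸ hye)
        exact Finset.mem_image.mpr ⟨y, hye, (eq_pair_of_two_mem (h2 f hfE) hxf hyf hxy).symm⟩
      obtain ⟨e₀, he₀, hxe₀⟩ := hall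
      have hsplit : ∀ e ∈ E, x ∉ e → (F.filter (fun f => Disjoint f e)).card
          + (F.filter (fun f => ¬ Disjoint f e)).card = F.card := fun e _ _ =>
        Finset.card_filter_add_card_filter_not _
      have hFdx : F.card = d x := rfl
      have hF3 : F.card = 3 := by
        have h1 := hFd e₀ he₀ hxe₀
        have hmle : (F.filter (fun f => ¬ Disjoint f e₀)).card ≤ 2 := by
          calc (F.filter (fun f => ¬ Disjoint f e₀)).card
              ≤ (e₀.image (fun y => ({x, y} : Finset (Fin n)))).card :=
                Finset.card_le_card (hFm e₀ he₀ hxe₀)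
            _ ≤ e₀.card := Finset.card_image_le
            _ = 2 := h2 e₀ he₀
        have := hsplit e₀ he₀ hxe₀
        omega
      -- every non-x edge is determined by two edges at x
      have hsub2 : E.filter (fun e => x ∉ e) ⊆
          (F.powersetCard 2).image (fun s => (s.sup id).erase x) := by
        intro e hme
        obtain ⟨he, hxe⟩ := Finset.mem_filter.mp hme
        have hmge : 1 < (F.filter (fun f => ¬ Disjoint f e)).card := by
          have := hsplit e he hxe
          have := hFd e he hxe
          omega
        obtain ⟨f₁, hf₁, f₂, hf₂, hne⟩ := Finset.one_lt_card.mp hmge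
        obtain ⟨hf₁F, hndf₁⟩ := Finset.mem_filter.mp hf₁
        obtain ⟨hf₂F, hndf₂⟩ := Finset.mem_filter.mp hf₂
        obtain ⟨hf₁E, hxf₁⟩ := Finset.mem_filter.mp hf₁F
        obtain ⟨hf₂E, hxf₂⟩ := Finset.mem_filter.mp hf₂F
        obtain ⟨y₁, hy₁f, hy₁e⟩ := Finset.not_disjoint_iff.mp hndf₁
        obtain ⟨y₂, hy₂f, hy₂e⟩ := Finset.not_disjoint_iff.mp hndf₂
        have hxy₁ : x ≠ y₁ := fun h => hxe (h ▸ hy₁e)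
        have hxy₂ : x ≠ y₂ := fun h => hxe (h ▸ hy₂e)
        have hef₁ : f₁ = {x, y₁} := eq_pair_of_two_mem (h2 f₁ hf₁E) hxf₁ hy₁f hxy₁
        have hef₂ : f₂ = {x, y₂} := eq_pair_of_two_mem (h2 f₂ hf₂E) hxf₂ hy₂f hxy₂
        have hy12 : y₁ ≠ y₂ := by
          rintro rfl; exact hne (hef₁.trans hef₂.symm)
        have hee : e = {y₁, y₂} := eq_pair_of_two_mem (h2 e he) hy₁e hy₂e hy12
        refine Finset.mem_image.mpr ⟨{f₁, f₂}, ?_, ?_⟩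
        · exact Finset.mem_powersetCard.mpr ⟨Finset.insert_subset hf₁F
            (Finset.singleton_subset_iff.mpr hf₂F), Finset.card_pair hne⟩
        · rw [Finset.sup_insert, Finset.sup_singleton, id, id, hef₁, hef₂]
          rw [hee]
          ext z
          simp only [Finset.mem_erase, Finset.sup_eq_union, Finset.mem_union, Finset.mem_insert,
            Finset.mem_singleton]
          constructor
          · rintro ⟨hzx, (rfl | rfl) | (rfl | rfl)⟩
            · exact absurd rfl hzx
            · exact Or.inl rfl
            · exact absurd rfl hzx
            · exact Or.inr rfl
          · rintro (rfl | rfl)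
            · exact ⟨hxy₁.symm, Or.inl (Or.inr rfl)⟩
            · exact ⟨hxy₂.symm, Or.inr (Or.inr rfl)⟩
      have hc2 : (E.filter (fun e => x ∉ e)).card ≤ 3 := by
        calc (E.filter (fun e => x ∉ e)).card
            ≤ ((F.powersetCard 2).image (fun s => (s.sup id).erase x)).card :=
              Finset.card_le_card hsub2
          _ ≤ (F.powersetCard 2).card := Finset.card_image_le
          _ = 3 := by rw [Finset.card_powersetCard, hF3]; decide
      have hsplitE : (E.filter (fun e => x ∈ e)).card + (E.filter (fun e => ¬ x ∈ e)).card
          = E.card := Finset.card_filter_add_card_filter_not _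
      have : (E.filter (fun e => x ∈ e)).card = F.card := rfl
      omega
  · push_neg at h3
    have hd2 : ∀ x, d x ≤ 2 := fun x => by have := h3 x; omega
    have hsum : ∑ x : Fin n, d x = 2 * E.card := by
      calc ∑ x : Fin n, d x = ∑ x : Fin n, ∑ e ∈ E, if x ∈ e then 1 else 0 :=
            Finset.sum_congr rfl fun x _ => Finset.card_filter _ _
        _ = ∑ e ∈ E, ∑ x : Fin n, if x ∈ e then 1 else 0 := Finset.sum_comm
        _ = ∑ e ∈ E, e.card := by
            refine Finset.sum_congr rfl fun e _ => ?_
            simp [Finset.sum_ite_mem, Finset.univ_inter]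
        _ = ∑ e ∈ E, 2 := Finset.sum_congr rfl h2
        _ = 2 * E.card := by rw [Finset.sum_const, smul_eq_mul, mul_comm]
    have hsle : ∑ x : Fin n, d x ≤ ∑ x : Fin n, 2 := Finset.sum_le_sum fun x _ => hd2 x
    have h2n : ∑ x : Fin n, (2:ℕ) = 2 * n := by
      rw [Finset.sum_const, Finset.card_univ, Fintype.card_fin, smul_eq_mul, mul_comm]
    have hEn : E.card = n := by omega
    have hall2 : ∀ x : Fin n, d x = 2 := by
      intro x
      have := (Finset.sum_eq_sum_iff_of_le (fun i (_ : i ∈ Finset.univ) => hd2 i)).mp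
        (by omega : ∑ x : Fin n, d x = ∑ x : Fin n, 2)
      exact this x (Finset.mem_univ x)
    obtain ⟨e₀, he₀⟩ := Finset.card_pos.mp (by omega : 0 < E.card)
    obtain ⟨x, hx⟩ := Finset.card_pos.mp (by rw [h2 e₀ he₀]; omega : 0 < e₀.card)
    have he₀F : e₀ ∈ E.filter (fun e => x ∈ e) := Finset.mem_filter.mpr ⟨he₀, hx⟩
    obtain ⟨f, hfF, hfne⟩ := Finset.exists_mem_ne (by rw [show (E.filter (fun e => x ∈ e)).card = d x from rfl, hall2]; omega) e₀
    obtain ⟨hfE, hxf⟩ := Finset.mem_filter.mp hfF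
    have hcover : ∀ g ∈ E, ∃ w ∈ e₀ ∪ f, w ∈ g := by
      intro g hg
      by_cases hge : g = e₀
      · exact ⟨x, Finset.mem_union_left _ hx, hge ▸ hx⟩
      by_cases hgf : g = f
      · exact ⟨x, Finset.mem_union_left _ hx, hgf ▸ hxf⟩
      by_contra hno
      push_neg at hno
      have hd1 : Disjoint e₀ g := Finset.disjoint_left.mpr fun a ha =>
        hno a (Finset.mem_union_left _ ha)
      have hd2' : Disjoint f g := Finset.disjoint_left.mpr fun a ha =>
        hno a (Finset.mem_union_right _ ha)
      exact hP e₀ he₀ f hfE g hg hfne.symm hge hgf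
        (Finset.not_disjoint_iff.mpr ⟨x, hx, hxf⟩) hd1 hd2'
    have hsubB : E ⊆ (e₀ ∪ f).biUnion (fun w => E.filter (fun g => w ∈ g)) := by
      intro g hg
      obtain ⟨w, hw, hwg⟩ := hcover g hg
      exact Finset.mem_biUnion.mpr ⟨w, hw, Finset.mem_filter.mpr ⟨hg, hwg⟩⟩
    have hcardle : E.card ≤ 6 := by
      calc E.card ≤ ((e₀ ∪ f).biUnion (fun w => E.filter (fun g => w ∈ g))).card :=
            Finset.card_le_card hsubB
        _ ≤ ∑ w ∈ e₀ ∪ f, (E.filter (fun g => w ∈ g)).card := Finset.card_biUnion_le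
        _ ≤ ∑ w ∈ e₀ ∪ f, 2 := Finset.sum_le_sum fun w _ => hall2 w ▸ le_refl _
        _ = 2 * (e₀ ∪ f).card := by rw [Finset.sum_const, smul_eq_mul, mul_comm]
        _ ≤ 6 := by
            have hui := Finset.card_union_add_card_inter e₀ f
            have hipos : 0 < (e₀ ∩ f).card :=
              Finset.card_pos.mpr ⟨x, Finset.mem_inter.mpr ⟨hx, hxf⟩⟩
            have := h2 e₀ he₀
            have := h2 f hfE
            omega
    omega

private lemma kneser_dist_two {n : ℕ} (hn : 7 ≤ n)
    (u v : {s : Finset (Fin n) // s.card = 2}) (huv : u ≠ v)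
    (hnd : ¬ Disjoint u.1 v.1) : (kneserGraph n 2).dist u v = 2 := by
  classical
  have hun : (Finset.univ \ (u.1 ∪ v.1)).card ≥ 2 := by
    have h1 : (u.1 ∪ v.1).card ≤ 4 := by
      have := Finset.card_union_le u.1 v.1
      rw [u.2, v.2] at this; omega
    rw [Finset.card_sdiff_of_subset (Finset.subset_univ _), Finset.card_univ, Fintype.card_fin]
    omega
  obtain ⟨t, hts, ht2⟩ := Finset.exists_subset_card_eq hun
  set m : {s : Finset (Fin n) // s.card = 2} := ⟨t, ht2⟩ with hm
  have hdu : Disjoint u.1 t := Finset.disjoint_left.mpr fun a ha hat =>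
    (Finset.mem_sdiff.mp (hts hat)).2 (Finset.mem_union_left _ ha)
  have hdv : Disjoint v.1 t := Finset.disjoint_left.mpr fun a ha hat =>
    (Finset.mem_sdiff.mp (hts hat)).2 (Finset.mem_union_right _ ha)
  have hune : ∀ w : {s : Finset (Fin n) // s.card = 2}, Disjoint w.1 t → w ≠ m := by
    intro w hdw h
    have : w.1 = t := congrArg Subtype.val h
    rw [this] at hdw
    have : t = ∅ := Finset.bot_eq_empty ▸ disjoint_self.mp hdw
    rw [this] at ht2
    simp at ht2
  have h1 : (kneserGraph n 2).Adj u m := ⟨hdu, hune u hdu⟩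
  have h2 : (kneserGraph n 2).Adj m v := ⟨(hdv.symm : Disjoint t v.1), (hune v hdv).symm⟩
  set p : (kneserGraph n 2).Walk u v := SimpleGraph.Walk.cons h1 (SimpleGraph.Walk.cons h2 SimpleGraph.Walk.nil) with hp
  have hle : (kneserGraph n 2).dist u v ≤ 2 := by
    have := SimpleGraph.dist_le p
    simpa [hp] using this
  have hpos : 0 < (kneserGraph n 2).dist u v :=
    SimpleGraph.Reachable.pos_dist_of_ne ⟨p⟩ huv
  have hne1 : (kneserGraph n 2).dist u v ≠ 1 := by
    intro h
    obtain ⟨hd, -⟩ := SimpleGraph.dist_eq_one_iff_adj.mp h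
    exact hnd hd
  omega

private lemma gp_ncard_le {n : ℕ} (hn : 7 ≤ n) {S : Set {s : Finset (Fin n) // s.card = 2}}
    (hS : (kneserGraph n 2).IsGPSet S) : S.ncard ≤ n - 1 := by
  classical
  have hfin : S.Finite := S.toFinite
  set E := hfin.toFinset.image Subtype.val with hE
  have hcardE : E.card = S.ncard := by
    rw [hE, Finset.card_image_of_injective _ Subtype.val_injective,
      ← Set.ncard_eq_toFinset_card]
  rw [← hcardE]
  refine key hn E ?_ ?_
  · rintro e he
    obtain ⟨u, -, rfl⟩ := Finset.mem_image.mp he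
    exact u.2
  · intro a ha b hb c hc hab hca hcb hnd hac hbc
    obtain ⟨u, huS, rfl⟩ := Finset.mem_image.mp ha
    obtain ⟨v, hvS, rfl⟩ := Finset.mem_image.mp hb
    obtain ⟨w, hwS, rfl⟩ := Finset.mem_image.mp hc
    rw [Set.Finite.mem_toFinset] at huS hvS hwS
    have huv : u ≠ v := fun h => hab (congrArg Subtype.val h)
    have huw : u ≠ w := fun h => hca (congrArg Subtype.val h).symm
    have hvw : v ≠ w := fun h => hcb (congrArg Subtype.val h).symm
    have h1 : (kneserGraph n 2).Adj u w := ⟨hac, huw⟩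
    have h2 : (kneserGraph n 2).Adj w v := ⟨hbc.symm, hvw.symm⟩
    set p : (kneserGraph n 2).Walk u v :=
      SimpleGraph.Walk.cons h1 (SimpleGraph.Walk.cons h2 SimpleGraph.Walk.nil) with hp
    have hpath : p.IsPath := by
      rw [SimpleGraph.Walk.isPath_def, hp]
      simp [SimpleGraph.Walk.support_cons, huv, huw, hvw, hvw.symm]
    have hdist : (kneserGraph n 2).dist u v = 2 := kneser_dist_two hn u v huv hnd
    have hlen : p.length = (kneserGraph n 2).dist u v := by
      rw [hdist, hp]; simp
    have hns := hS huS hvS hwS huv huw hvw p hpath hlen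
    apply hns
    rw [hp]
    simp [SimpleGraph.Walk.support_cons]

private lemma gp_lower {n : ℕ} (hn : 7 ≤ n) :
    ∃ S : Set {s : Finset (Fin n) // s.card = 2},
      (kneserGraph n 2).IsGPSet S ∧ S.ncard = n - 1 := by
  classical
  set z : Fin n := ⟨0, by omega⟩ with hz
  set T : Finset {s : Finset (Fin n) // s.card = 2} :=
    Finset.univ.filter (fun v => z ∈ v.1) with hT
  have hmemT : ∀ v : {s : Finset (Fin n) // s.card = 2}, v ∈ T ↔ z ∈ v.1 := by
    intro v; rw [hT, Finset.mem_filter]; simp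
  refine ⟨↑T, ?_, ?_⟩
  · intro u v w hu hv hw huv huw hvw p hpath hlen hwsup
    have hzu : z ∈ u.1 := (hmemT u).mp (Finset.mem_coe.mp hu)
    have hzv : z ∈ v.1 := (hmemT v).mp (Finset.mem_coe.mp hv)
    have hzw : z ∈ w.1 := (hmemT w).mp (Finset.mem_coe.mp hw)
    have hnd : ¬ Disjoint u.1 v.1 := fun h => (Finset.disjoint_left.mp h hzu) hzv
    have hdist : (kneserGraph n 2).dist u v = 2 := kneser_dist_two hn u v huv hnd
    have hlen2 : p.length = 2 := by rw [hlen, hdist]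
    have hspec := congrArg SimpleGraph.Walk.length (p.take_spec hwsup)
    rw [SimpleGraph.Walk.length_append, hlen2] at hspec
    have htpos : (p.takeUntil w hwsup).length ≠ 0 := fun h =>
      huw (SimpleGraph.Walk.eq_of_length_eq_zero h)
    have hdpos : (p.dropUntil w hwsup).length ≠ 0 := fun h =>
      hvw.symm (SimpleGraph.Walk.eq_of_length_eq_zero h)
    have ht1 : (p.takeUntil w hwsup).length = 1 := by omega
    have hdle : (kneserGraph n 2).dist u w ≤ 1 :=
      ht1 ▸ SimpleGraph.dist_le (p.takeUntil w hwsup)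
    have hdpos' : 0 < (kneserGraph n 2).dist u w :=
      SimpleGraph.Reachable.pos_dist_of_ne ⟨p.takeUntil w hwsup⟩ huw
    have hadj : (kneserGraph n 2).Adj u w :=
      SimpleGraph.dist_eq_one_iff_adj.mp (by omega)
    exact (Finset.disjoint_left.mp hadj.1 hzu) hzw
  · rw [Set.ncard_coe_finset]
    have : ((Finset.univ : Finset (Fin n)).erase z).card = T.card := by
      refine Finset.card_bij
        (fun a ha => (⟨{z, a}, Finset.card_pair (Finset.mem_erase.mp ha).1.symm⟩ :
          {s : Finset (Fin n) // s.card = 2})) ?_ ?_ ?_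
      · intro a ha
        rw [hmemT]
        exact Finset.mem_insert_self z {a}
      · intro a₁ ha₁ a₂ ha₂ h
        have h' : ({z, a₁} : Finset (Fin n)) = {z, a₂} := congrArg Subtype.val h
        have : a₁ ∈ ({z, a₂} : Finset (Fin n)) := h' ▸ Finset.mem_insert_of_mem
          (Finset.mem_singleton_self a₁)
        rcases Finset.mem_insert.mp this with h'' | h''
        · exact absurd h'' (Finset.mem_erase.mp ha₁).1
        · exact Finset.mem_singleton.mp h''
      · intro v hvT
        obtain ⟨y, hyz, hvy⟩ := pair_of_mem_card_two v.2 ((hmemT v).mp hvT)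
        refine ⟨y, Finset.mem_erase.mpr ⟨hyz, Finset.mem_univ y⟩, ?_⟩
        exact Subtype.ext hvy.symm
    rw [← this, Finset.card_erase_of_mem (Finset.mem_univ z), Finset.card_univ,
      Fintype.card_fin]


end Aux

/-- For every integer `n ≥ 7`, the general position number of the Kneser graph
`K(n,2)` equals `n - 1`. -/
theorem gpNumber_kneserGraph_two (n : ℕ) (hn : 7 ≤ n) :
    (kneserGraph n 2).gpNumber = n - 1 := by
  obtain ⟨S₀, hS₀, hS₀card⟩ := gp_lower hn
  have hub : ∀ m ∈ {m | ∃ S, (kneserGraph n 2).IsGPSet S ∧ m = S.ncard}, m ≤ n - 1 := by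
    rintro m ⟨S, hS, rfl⟩
    exact gp_ncard_le hn hS
  refine le_antisymm ?_ ?_
  · exact csSup_le ⟨0, ∅, fun u v w hu => absurd hu (Set.notMem_empty u), by simp⟩ hub
  · exact le_csSup ⟨n - 1, fun m hm => hub m hm⟩ ⟨S₀, hS₀, hS₀card.symm⟩
end

section
/- If G and H are finite connected graphs, then gp(G □ H) ≥ gp(G) + gp(H) − 2. -/
namespace SimpleGraph

section Aux

variable {α β : Type*} [DecidableEq α] [DecidableEq β] {G : SimpleGraph α} {H : SimpleGraph β}

lemma dist_le_of_mem_support {a b c : α} (q : G.Walk a b) (hc : c ∈ q.support) :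
    G.dist a c ≤ q.length :=
  (G.dist_le (q.takeUntil c hc)).trans (q.length_takeUntil_le hc)

lemma exists_geodesic_through {a b c : α} (q : G.Walk a b) (hq : q.length = G.dist a b)
    (hc : c ∈ q.support) :
    ∃ p : G.Walk a b, p.IsPath ∧ p.length = G.dist a b ∧ c ∈ p.support := by
  have hsplit : (q.takeUntil c hc).append (q.dropUntil c hc) = q := q.take_spec hc
  have hlen : (q.takeUntil c hc).length + (q.dropUntil c hc).length = q.length := by
    conv_rhs => rw [← hsplit]
    rw [Walk.length_append]
  have h1 : G.dist a c ≤ (q.takeUntil c hc).length := G.dist_le _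
  have h2 : G.dist c b ≤ (q.dropUntil c hc).length := G.dist_le _
  obtain ⟨r1, hr1⟩ := Reachable.exists_walk_length_eq_dist ⟨q.takeUntil c hc⟩
  obtain ⟨r2, hr2⟩ := Reachable.exists_walk_length_eq_dist ⟨q.dropUntil c hc⟩
  have h3 : G.dist a b ≤ (r1.append r2).length := G.dist_le _
  have hplen : (r1.append r2).length = G.dist a b := by
    rw [Walk.length_append] at h3 ⊢
    omega
  exact ⟨r1.append r2, (r1.append r2).isPath_of_length_eq_dist hplen, hplen,
    (Walk.mem_support_append_iff _ _).2 (Or.inl r1.end_mem_support)⟩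

open Classical in
/-- Projection of a walk in `G □ H` to `G`. -/
noncomputable def projL : ∀ {x y : α × β}, (G □ H).Walk x y → G.Walk x.1 y.1
  | _, _, Walk.nil => Walk.nil
  | x, _, Walk.cons (v := z) h p =>
    if hxz : x.1 = z.1 then (projL p).copy hxz.symm rfl
    else Walk.cons ((boxProd_adj.1 h).resolve_right fun hr => hxz hr.2).1 (projL p)

open Classical in
/-- Projection of a walk in `G □ H` to `H`. -/
noncomputable def projR : ∀ {x y : α × β}, (G □ H).Walk x y → H.Walk x.2 y.2
  | _, _, Walk.nil => Walk.nil
  | x, _, Walk.cons (v := z) h p =>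
    if hxz : x.2 = z.2 then (projR p).copy hxz.symm rfl
    else Walk.cons ((boxProd_adj.1 h).resolve_left fun hl => hxz hl.2).1 (projR p)

lemma projLR_length : ∀ {x y : α × β} (p : (G □ H).Walk x y),
    (projL p).length + (projR p).length = p.length
  | _, _, Walk.nil => by simp [projL, projR]
  | x, _, Walk.cons (v := z) h p => by
    have IH := projLR_length p
    rcases boxProd_adj.1 h with ⟨hadj, h2⟩ | ⟨hadj, h1⟩
    · have hxz : ¬ x.1 = z.1 := hadj.ne
      rw [projL, projR, dif_neg hxz, dif_pos h2]
      simp only [Walk.length_cons, Walk.length_copy]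
      omega
    · have hxz : ¬ x.2 = z.2 := hadj.ne
      rw [projL, projR, dif_pos h1, dif_neg hxz]
      simp only [Walk.length_cons, Walk.length_copy]
      omega

lemma mem_projL_support : ∀ {x y : α × β} (p : (G □ H).Walk x y) (a : α × β),
    a ∈ p.support → a.1 ∈ (projL p).support
  | _, _, Walk.nil, a, ha => by
    rw [Walk.support_nil, List.mem_singleton] at ha
    subst ha
    simp [projL]
  | x, _, Walk.cons (v := z) h p, a, ha => by
    rw [Walk.support_cons, List.mem_cons] at ha
    rw [projL]
    by_cases hxz : x.1 = z.1
    · rw [dif_pos hxz, Walk.support_copy]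
      rcases ha with rfl | ha
      · rw [hxz]; exact (projL p).start_mem_support
      · exact mem_projL_support p a ha
    · rw [dif_neg hxz, Walk.support_cons, List.mem_cons]
      rcases ha with rfl | ha
      · exact Or.inl rfl
      · exact Or.inr (mem_projL_support p a ha)

lemma mem_projR_support : ∀ {x y : α × β} (p : (G □ H).Walk x y) (a : α × β),
    a ∈ p.support → a.2 ∈ (projR p).support
  | _, _, Walk.nil, a, ha => by
    rw [Walk.support_nil, List.mem_singleton] at ha
    subst ha
    simp [projR]
  | x, _, Walk.cons (v := z) h p, a, ha => by
    rw [Walk.support_cons, List.mem_cons] at ha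
    rw [projR]
    by_cases hxz : x.2 = z.2
    · rw [dif_pos hxz, Walk.support_copy]
      rcases ha with rfl | ha
      · rw [hxz]; exact (projR p).start_mem_support
      · exact mem_projR_support p a ha
    · rw [dif_neg hxz, Walk.support_cons, List.mem_cons]
      rcases ha with rfl | ha
      · exact Or.inl rfl
      · exact Or.inr (mem_projR_support p a ha)

lemma dist_boxProd_le (hG : G.Connected) (hH : H.Connected) (x y : α × β) :
    (G □ H).dist x y ≤ G.dist x.1 y.1 + H.dist x.2 y.2 := by
  obtain ⟨w1, hw1⟩ := hG.exists_walk_length_eq_dist x.1 y.1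
  obtain ⟨w2, hw2⟩ := hH.exists_walk_length_eq_dist x.2 y.2
  have := (G □ H).dist_le
    (((w1.boxProdLeft H x.2).append (w2.boxProdRight G y.1)).copy Prod.mk.eta Prod.mk.eta)
  rw [Walk.length_copy, Walk.length_append] at this
  have e1 : (w1.boxProdLeft H x.2).length = w1.length := Walk.length_map _ _
  have e2 : (w2.boxProdRight G y.1).length = w2.length := Walk.length_map _ _
  omega

lemma proj_geodesic (hG : G.Connected) (hH : H.Connected) {x y : α × β}
    (p : (G □ H).Walk x y) (hp : p.length = (G □ H).dist x y) :
    (projL p).length = G.dist x.1 y.1 ∧ (projR p).length = H.dist x.2 y.2 := by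
  have h1 : G.dist x.1 y.1 ≤ (projL p).length := G.dist_le _
  have h2 : H.dist x.2 y.2 ≤ (projR p).length := H.dist_le _
  have h3 := projLR_length p
  have h4 : (G □ H).dist x y ≤ G.dist x.1 y.1 + H.dist x.2 y.2 := dist_boxProd_le hG hH x y
  omega

end Aux

end SimpleGraph

open SimpleGraph
/-- If `G` and `H` are finite connected graphs, then
`gp(G □ H) ≥ gp(G) + gp(H) - 2`. -/
theorem gpNumber_boxProd_ge {α β : Type*} [Fintype α] [Fintype β]
    (G : SimpleGraph α) (H : SimpleGraph β) (hG : G.Connected) (hH : H.Connected) :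
    G.gpNumber + H.gpNumber - 2 ≤ (G □ H).gpNumber := by
  classical
  have hbddG : BddAbove {n | ∃ S : Set α, G.IsGPSet S ∧ n = S.ncard} := by
    refine ⟨Fintype.card α, ?_⟩
    rintro n ⟨S, -, rfl⟩
    simpa [Set.ncard_univ, Nat.card_eq_fintype_card] using
      Set.ncard_le_ncard (Set.subset_univ S) Set.finite_univ
  have hbddH : BddAbove {n | ∃ S : Set β, H.IsGPSet S ∧ n = S.ncard} := by
    refine ⟨Fintype.card β, ?_⟩
    rintro n ⟨S, -, rfl⟩
    simpa [Set.ncard_univ, Nat.card_eq_fintype_card] using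
      Set.ncard_le_ncard (Set.subset_univ S) Set.finite_univ
  have hbddP : BddAbove {n | ∃ S : Set (α × β), (G □ H).IsGPSet S ∧ n = S.ncard} := by
    refine ⟨Fintype.card (α × β), ?_⟩
    rintro n ⟨S, -, rfl⟩
    simpa [Set.ncard_univ, Nat.card_eq_fintype_card] using
      Set.ncard_le_ncard (Set.subset_univ S) Set.finite_univ
  have hemptyG : SimpleGraph.IsGPSet G (∅ : Set α) := by
    intro u v w hu
    exact absurd hu (Set.notMem_empty u)
  have hemptyH : SimpleGraph.IsGPSet H (∅ : Set β) := by
    intro u v w hu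
    exact absurd hu (Set.notMem_empty u)
  obtain ⟨S, hS, hScard⟩ :
      G.gpNumber ∈ {n | ∃ S : Set α, G.IsGPSet S ∧ n = S.ncard} :=
    Nat.sSup_mem ⟨0, ∅, hemptyG, by simp⟩ hbddG
  obtain ⟨T, hT, hTcard⟩ :
      H.gpNumber ∈ {n | ∃ S : Set β, H.IsGPSet S ∧ n = S.ncard} :=
    Nat.sSup_mem ⟨0, ∅, hemptyH, by simp⟩ hbddH
  have hg1 : 1 ≤ G.gpNumber := by
    obtain ⟨g₀⟩ := hG.nonempty
    refine le_csSup hbddG ⟨{g₀}, ?_, (Set.ncard_singleton _).symm⟩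
    intro u v w hu hv hw huv
    rw [Set.mem_singleton_iff] at hu hv
    exact absurd (hu.trans hv.symm) huv
  have hh1 : 1 ≤ H.gpNumber := by
    obtain ⟨h₀⟩ := hH.nonempty
    refine le_csSup hbddH ⟨{h₀}, ?_, (Set.ncard_singleton _).symm⟩
    intro u v w hu hv hw huv
    rw [Set.mem_singleton_iff] at hu hv
    exact absurd (hu.trans hv.symm) huv
  obtain ⟨s, hs⟩ : S.Nonempty := Set.nonempty_of_ncard_ne_zero (by omega)
  obtain ⟨t, ht⟩ : T.Nonempty := Set.nonempty_of_ncard_ne_zero (by omega)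
  set U : Set (α × β) :=
    ((fun g => (g, t)) '' (S \ {s})) ∪ ((fun h => (s, h)) '' (T \ {t})) with hUdef
  have hmemU : ∀ z ∈ U, (z.1 ∈ S ∧ z.1 ≠ s ∧ z.2 = t) ∨ (z.1 = s ∧ z.2 ∈ T ∧ z.2 ≠ t) := by
    rintro z (⟨g, hg, rfl⟩ | ⟨h, hh, rfl⟩)
    · exact Or.inl ⟨hg.1, hg.2, rfl⟩
    · exact Or.inr ⟨rfl, hh.1, hh.2⟩
  have hUgp : (G □ H).IsGPSet U := by
    intro u v w hu hv hw huv huw hvw p hpath hplen hwsup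
    have hproj := proj_geodesic hG hH p hplen
    have hw1 : w.1 ∈ (SimpleGraph.projL p).support := mem_projL_support p w hwsup
    have hw2 : w.2 ∈ (SimpleGraph.projR p).support := mem_projR_support p w hwsup
    have hmemS : ∀ z ∈ U, z.1 ∈ S := by
      intro z hz
      rcases hmemU z hz with ⟨h1, -, -⟩ | ⟨h1, -, -⟩
      · exact h1
      · exact h1 ▸ hs
    have hmemT : ∀ z ∈ U, z.2 ∈ T := by
      intro z hz
      rcases hmemU z hz with ⟨-, -, h1⟩ | ⟨-, h1, -⟩
      · exact h1 ▸ ht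
      · exact h1
    have claim1 : u.1 ≠ v.1 → u.1 ≠ w.1 → v.1 ≠ w.1 → False := by
      intro h1 h2 h3
      obtain ⟨q, hq, hqlen, hqmem⟩ := exists_geodesic_through (SimpleGraph.projL p) hproj.1 hw1
      exact hS (hmemS u hu) (hmemS v hv) (hmemS w hw) h1 h2 h3 q hq hqlen hqmem
    have claim2 : u.2 ≠ v.2 → u.2 ≠ w.2 → v.2 ≠ w.2 → False := by
      intro h1 h2 h3
      obtain ⟨q, hq, hqlen, hqmem⟩ := exists_geodesic_through (SimpleGraph.projR p) hproj.2 hw2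
      exact hT (hmemT u hu) (hmemT v hv) (hmemT w hw) h1 h2 h3 q hq hqlen hqmem
    rcases hmemU w hw with ⟨hwS, hws, hwt⟩ | ⟨hws, hwT, hwt⟩
    · by_cases h : u.1 = v.1
      · have hd : G.dist u.1 w.1 ≤ (SimpleGraph.projL p).length :=
          dist_le_of_mem_support _ hw1
        have h0 : G.dist u.1 v.1 = 0 := by rw [h]; exact G.dist_self
        have hz : G.dist u.1 w.1 = 0 := by
          have := hproj.1
          omega
        have huw1 : u.1 = w.1 := hG.dist_eq_zero_iff.mp hz
        rcases hmemU u hu with ⟨-, hus, hut⟩ | ⟨hus, -, -⟩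
        · exact huw (Prod.ext huw1 (hut.trans hwt.symm))
        · exact hws (huw1.symm.trans hus)
      · refine claim1 h ?_ ?_
        · intro he
          rcases hmemU u hu with ⟨-, hus, hut⟩ | ⟨hus, -, -⟩
          · exact huw (Prod.ext he (hut.trans hwt.symm))
          · exact hws (he.symm.trans hus)
        · intro he
          rcases hmemU v hv with ⟨-, hvs, hvt⟩ | ⟨hvs, -, -⟩
          · exact hvw (Prod.ext he (hvt.trans hwt.symm))
          · exact hws (he.symm.trans hvs)
    · by_cases h : u.2 = v.2
      · have hd : H.dist u.2 w.2 ≤ (SimpleGraph.projR p).length :=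
          dist_le_of_mem_support _ hw2
        have h0 : H.dist u.2 v.2 = 0 := by rw [h]; exact H.dist_self
        have hz : H.dist u.2 w.2 = 0 := by
          have := hproj.2
          omega
        have huw2 : u.2 = w.2 := hH.dist_eq_zero_iff.mp hz
        rcases hmemU u hu with ⟨-, -, hut⟩ | ⟨hus, -, -⟩
        · exact hwt (huw2.symm.trans hut)
        · exact huw (Prod.ext (hus.trans hws.symm) huw2)
      · refine claim2 h ?_ ?_
        · intro he
          rcases hmemU u hu with ⟨-, -, hut⟩ | ⟨hus, -, -⟩
          · exact hwt (he.symm.trans hut)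
          · exact huw (Prod.ext (hus.trans hws.symm) he)
        · intro he
          rcases hmemU v hv with ⟨-, -, hvt⟩ | ⟨hvs, -, -⟩
          · exact hwt (he.symm.trans hvt)
          · exact hvw (Prod.ext (hvs.trans hws.symm) he)
  have hdisj : Disjoint ((fun g => (g, t)) '' (S \ {s})) ((fun h => (s, h)) '' (T \ {t})) := by
    rw [Set.disjoint_left]
    rintro z ⟨g, hg, rfl⟩ ⟨h, hh, heq⟩
    exact hg.2 (congrArg Prod.fst heq).symm
  have hinj1 : Function.Injective (fun g : α => (g, t)) := fun a b hab => congrArg Prod.fst hab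
  have hinj2 : Function.Injective (fun h : β => (s, h)) := fun a b hab => congrArg Prod.snd hab
  have hcardU : U.ncard = S.ncard - 1 + (T.ncard - 1) := by
    rw [hUdef, Set.ncard_union_eq hdisj (Set.toFinite _) (Set.toFinite _),
      Set.ncard_image_of_injective _ hinj1, Set.ncard_image_of_injective _ hinj2,
      Set.ncard_diff_singleton_of_mem hs, Set.ncard_diff_singleton_of_mem ht]
  have hle : G.gpNumber + H.gpNumber - 2 ≤ U.ncard := by omega
  exact hle.trans (le_csSup hbddP ⟨U, hUgp, rfl⟩)
end

section
/- If k ≥ 2 and n_1, …, n_k ≥ 2 are integers, then the general position number of the Cartesian product K_{n_1} □ ⋯ □ K_{n_k} of complete graphs satisfies gp(K_{n_1} □ ⋯ □ K_{n_k}) ≥ n_1 + ⋯ + n_k − k. -/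
/-- The Cartesian product `K_{n₁} □ ⋯ □ K_{n_k}` of complete graphs (a Hamming
graph): vertices are tuples `(j₁, …, j_k)` with `j_i ∈ {1, …, n_i}`, two tuples
adjacent iff they differ in exactly one coordinate. -/
def hammingGraph {k : ℕ} (n : Fin k → ℕ) : SimpleGraph (Π i, Fin (n i)) where
  Adj a b := ∃! i, a i ≠ b i
  symm := by
    constructor
    rintro a b ⟨i, hi, hmin⟩
    exact ⟨i, hi.symm, fun j hj => hmin j hj.symm⟩
  loopless := by
    constructor
    rintro a ⟨i, hi, -⟩
    exact hi rfl

/-- If `k ≥ 2` and `n₁, …, n_k ≥ 2`, then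
`gp(K_{n₁} □ ⋯ □ K_{n_k}) ≥ n₁ + ⋯ + n_k - k`. -/
theorem gpNumber_hammingGraph_ge {k : ℕ} (hk : 2 ≤ k) (n : Fin k → ℕ)
    (hn : ∀ i, 2 ≤ n i) :
    (∑ i, n i) - k ≤ (hammingGraph n).gpNumber := by
  classical
  have hz0 : ∀ i, 0 < n i := fun i => lt_of_lt_of_le two_pos (hn i)
  let z : Π i, Fin (n i) := fun i => ⟨0, hz0 i⟩
  let A := Σ i : Fin k, {j : Fin (n i) // j ≠ z i}
  let f : A → (Π i, Fin (n i)) := fun x => Function.update z x.1 x.2.1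
  have hfinj : Function.Injective f := by
    rintro ⟨i, a, ha⟩ ⟨i', b, hb⟩ h
    by_cases hii : i = i'
    · subst hii
      have h2 := congrFun h i
      simp only [f, Function.update_self] at h2
      simp_all
    · have h2 := congrFun h i
      simp only [f, Function.update_self] at h2
      rw [Function.update_of_ne hii] at h2
      exact absurd h2 ha
  -- adjacency characterizations
  have hadj_same : ∀ (i : Fin k) (a b : Fin (n i)), a ≠ b →
      (hammingGraph n).Adj (Function.update z i a) (Function.update z i b) := by
    intro i a b hab
    refine ⟨i, by simpa using hab, ?_⟩
    intro j hj
    by_contra hji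
    rw [Function.update_of_ne hji, Function.update_of_ne hji] at hj
    exact hj rfl
  have hadj_z : ∀ (i : Fin k) (a : Fin (n i)), a ≠ z i →
      (hammingGraph n).Adj (Function.update z i a) z := by
    intro i a ha
    refine ⟨i, by simpa using ha, ?_⟩
    intro j hj
    by_contra hji
    rw [Function.update_of_ne hji] at hj
    exact hj rfl
  have hnadj : ∀ (i i' : Fin k) (a : Fin (n i)) (b : Fin (n i')), i ≠ i' →
      a ≠ z i → b ≠ z i' →
      ¬ (hammingGraph n).Adj (Function.update z i a) (Function.update z i' b) := by
    rintro i i' a b hii ha hb ⟨j, hj, huniq⟩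
    have h1 : Function.update z i a i ≠ Function.update z i' b i := by
      rw [Function.update_self, Function.update_of_ne hii]
      exact ha
    have h2 : Function.update z i a i' ≠ Function.update z i' b i' := by
      rw [Function.update_self, Function.update_of_ne (Ne.symm hii)]
      exact fun h => hb h.symm
    exact hii ((huniq i h1).trans (huniq i' h2).symm)
  -- distance formula
  have hdist : ∀ (i i' : Fin k) (a : Fin (n i)) (b : Fin (n i')) (ha : a ≠ z i)
      (hb : b ≠ z i'), Function.update z i a ≠ Function.update z i' b →
      (hammingGraph n).dist (Function.update z i a) (Function.update z i' b) =
        if i = i' then 1 else 2 := by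
    intro i i' a b ha hb hne
    by_cases hii : i = i'
    · subst hii
      rw [if_pos rfl, SimpleGraph.dist_eq_one_iff_adj]
      refine hadj_same i a b ?_
      intro h
      exact hne (by rw [h])
    · rw [if_neg hii]
      have w1 := hadj_z i a ha
      have w2 := (hadj_z i' b hb).symm
      let wk : (hammingGraph n).Walk (Function.update z i a) (Function.update z i' b) :=
        SimpleGraph.Walk.cons w1 (SimpleGraph.Walk.cons w2 SimpleGraph.Walk.nil)
      have hwk : wk.length = 2 := rfl
      have hle : (hammingGraph n).dist (Function.update z i a) (Function.update z i' b) ≤ 2 :=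
        hwk ▸ SimpleGraph.dist_le wk
      have hne0 : (hammingGraph n).dist (Function.update z i a) (Function.update z i' b) ≠ 0 :=
        fun h => (SimpleGraph.dist_eq_zero_iff_eq_or_not_reachable.mp h).elim hne
          (fun hr => hr ⟨wk⟩)
      have hne1 : (hammingGraph n).dist (Function.update z i a) (Function.update z i' b) ≠ 1 :=
        fun h => hnadj i i' a b hii ha hb (SimpleGraph.dist_eq_one_iff_adj.mp h)
      omega
  -- the set
  set S : Set (Π i, Fin (n i)) := Set.range f with hS
  have hGP : (hammingGraph n).IsGPSet S := by
    rintro u v w hu hv hw huv huw hvw p hp hlen hwmem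
    obtain ⟨⟨i, a, ha⟩, rfl⟩ := hu
    obtain ⟨⟨i', b, hb⟩, rfl⟩ := hv
    obtain ⟨⟨i'', c, hc⟩, rfl⟩ := hw
    obtain ⟨q, r, hqr⟩ := SimpleGraph.Walk.mem_support_iff_exists_append.mp hwmem
    have hql : (hammingGraph n).dist (f ⟨i, ⟨a, ha⟩⟩) (f ⟨i'', ⟨c, hc⟩⟩) ≤ q.length :=
      SimpleGraph.dist_le q
    have hrl : (hammingGraph n).dist (f ⟨i'', ⟨c, hc⟩⟩) (f ⟨i', ⟨b, hb⟩⟩) ≤ r.length :=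
      SimpleGraph.dist_le r
    have hlen2 : p.length = q.length + r.length := by
      rw [hqr, SimpleGraph.Walk.length_append]
    have d1 : (hammingGraph n).dist (f ⟨i, ⟨a, ha⟩⟩) (f ⟨i', ⟨b, hb⟩⟩) =
        if i = i' then 1 else 2 := hdist i i' a b ha hb huv
    have d2 : (hammingGraph n).dist (f ⟨i, ⟨a, ha⟩⟩) (f ⟨i'', ⟨c, hc⟩⟩) =
        if i = i'' then 1 else 2 := hdist i i'' a c ha hc huw
    have d3 : (hammingGraph n).dist (f ⟨i'', ⟨c, hc⟩⟩) (f ⟨i', ⟨b, hb⟩⟩) =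
        if i'' = i' then 1 else 2 := hdist i'' i' c b hc hb (Ne.symm hvw)
    have hsum : (hammingGraph n).dist (f ⟨i, ⟨a, ha⟩⟩) (f ⟨i'', ⟨c, hc⟩⟩) +
        (hammingGraph n).dist (f ⟨i'', ⟨c, hc⟩⟩) (f ⟨i', ⟨b, hb⟩⟩) ≤
        (hammingGraph n).dist (f ⟨i, ⟨a, ha⟩⟩) (f ⟨i', ⟨b, hb⟩⟩) :=
      calc (hammingGraph n).dist (f ⟨i, ⟨a, ha⟩⟩) (f ⟨i'', ⟨c, hc⟩⟩) +
          (hammingGraph n).dist (f ⟨i'', ⟨c, hc⟩⟩) (f ⟨i', ⟨b, hb⟩⟩) ≤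
          q.length + r.length := add_le_add hql hrl
        _ = p.length := hlen2.symm
        _ = _ := hlen
    have b2 : 1 ≤ (hammingGraph n).dist (f ⟨i, ⟨a, ha⟩⟩) (f ⟨i'', ⟨c, hc⟩⟩) := by
      rw [d2]; split_ifs <;> omega
    have b3 : 1 ≤ (hammingGraph n).dist (f ⟨i'', ⟨c, hc⟩⟩) (f ⟨i', ⟨b, hb⟩⟩) := by
      rw [d3]; split_ifs <;> omega
    by_cases hii : i = i'
    · rw [d1, if_pos hii] at hsum
      omega
    · rw [d1, if_neg hii] at hsum
      have e2 : i = i'' := by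
        by_contra hc2
        rw [d2, if_neg hc2] at hsum
        omega
      have e3 : i'' = i' := by
        by_contra hc3
        rw [d3, if_neg hc3] at hsum
        omega
      exact hii (e2.trans e3)
  -- cardinality
  have hcard : S.ncard = (∑ i, n i) - k := by
    rw [hS, ← Nat.card_coe_set_eq, Nat.card_range_of_injective hfinj,
      Nat.card_eq_fintype_card]
    have hA : Fintype.card A = ∑ i, (n i - 1) := by
      rw [Fintype.card_sigma]
      apply Finset.sum_congr rfl
      intro i _
      rw [Fintype.card_subtype_compl, Fintype.card_subtype_eq, Fintype.card_fin]
    rw [hA]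
    have h1 : ∑ i, (n i - 1) + ∑ _i : Fin k, 1 = ∑ i, n i := by
      rw [← Finset.sum_add_distrib]
      exact Finset.sum_congr rfl fun i _ => by have := hn i; omega
    simp only [Finset.sum_const, Finset.card_univ, Fintype.card_fin, smul_eq_mul, mul_one] at h1
    omega
  -- conclude
  apply le_csSup
  · refine ⟨(Set.univ : Set (Π i, Fin (n i))).ncard, ?_⟩
    rintro m ⟨T, -, rfl⟩
    exact Set.ncard_le_ncard (Set.subset_univ T) Set.finite_univ
  · exact ⟨S, hGP, hcard.symm⟩
end

section
/- Let k ≥ 2 and n_1, …, n_k ≥ 2 be integers and let G = K_{n_1} □ ⋯ □ K_{n_k} with vertex set the tuples (j_1,…,j_k), j_i ∈ {1,…,n_i}. For i ∈ {1,…,k} let X_i be the set of tuples whose coordinates are all equal to 1 except the i-th coordinate, which is some j ∈ {2,…,n_i}. Then X = X_1 ∪ ⋯ ∪ X_k is a general position set of G of cardinality n_1 + ⋯ + n_k − k. -/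
/-- Let `k ≥ 2`, `n₁, …, n_k ≥ 2` and `G = K_{n₁} □ ⋯ □ K_{n_k}`. For each `i`
let `X_i` consist of the tuples whose coordinates are all the first element
except the `i`-th one; then `X = X_1 ∪ ⋯ ∪ X_k` is a general position set of
`G` of cardinality `n₁ + ⋯ + n_k - k`. -/
theorem isGPSet_hammingGraph {k : ℕ} (hk : 2 ≤ k) (n : Fin k → ℕ)
    (hn : ∀ i, 2 ≤ n i)
    (X : Set (Π i, Fin (n i)))
    (hX : X = ⋃ i : Fin k,
      {v : Π i, Fin (n i) | (v i : ℕ) ≠ 0 ∧ ∀ j, j ≠ i → (v j : ℕ) = 0}) :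
    (hammingGraph n).IsGPSet X ∧ X.ncard = (∑ i, n i) - k := by
  
  classical
  set G := hammingGraph n with hG
  set S : Fin k → Set (Π i, Fin (n i)) :=
    fun i => {v | (v i : ℕ) ≠ 0 ∧ ∀ j, j ≠ i → (v j : ℕ) = 0} with hS
  have hXS : X = ⋃ i, S i := hX
  have hzpos : ∀ i, 0 < n i := fun i => lt_of_lt_of_le two_pos (hn i)
  set z : Π i, Fin (n i) := fun i => ⟨0, hzpos i⟩ with hz
  -- extensionality within a class
  have heq : ∀ (i : Fin k) (u v : Π i, Fin (n i)), u ∈ S i → v ∈ S i →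
      u i = v i → u = v := by
    intro i u v hu hv h
    funext j
    by_cases hj : j = i
    · subst hj; exact h
    · exact Fin.ext ((hu.2 j hj).trans (hv.2 j hj).symm)
  have hadj_same : ∀ (i : Fin k) (u v), u ∈ S i → v ∈ S i → u ≠ v → G.Adj u v := by
    intro i u v hu hv huv
    refine ⟨i, fun h => huv (heq i u v hu hv h), ?_⟩
    intro j hj
    by_contra hji
    exact hj (Fin.ext ((hu.2 j hji).trans (hv.2 j hji).symm))
  have hadj_z : ∀ (i : Fin k) (u), u ∈ S i → G.Adj u z := by
    intro i u hu
    refine ⟨i, fun h => hu.1 (by rw [h]), ?_⟩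
    intro j hj
    by_contra hji
    exact hj (Fin.ext (hu.2 j hji))
  have hnotadj : ∀ (i j : Fin k) (u v), i ≠ j → u ∈ S i → v ∈ S j → ¬ G.Adj u v := by
    rintro i j u v hij hu hv ⟨m, hm, huniq⟩
    have h1 : i = m := huniq i (fun h => hu.1 (by rw [Fin.ext_iff] at h; rw [h, hv.2 i hij]))
    have h2 : j = m := huniq j (fun h => hv.1 (by rw [Fin.ext_iff] at h; rw [← h, hu.2 j (Ne.symm hij)]))
    exact hij (h1.trans h2.symm)
  have hclass : ∀ (l i : Fin k) (w u), w ∈ S l → u ∈ S i → G.Adj w u → l = i := by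
    intro l i w u hw hu hadj
    by_contra h
    exact hnotadj l i w u h hw hu hadj
  have hdist2 : ∀ (i j : Fin k) (u v), u ∈ S i → v ∈ S j → G.dist u v ≤ 2 := by
    intro i j u v hu hv
    have := SimpleGraph.dist_le
      (SimpleGraph.Walk.cons (hadj_z i u hu)
        (SimpleGraph.Walk.cons (hadj_z j v hv).symm SimpleGraph.Walk.nil))
    simpa using this
  constructor
  · rw [hXS]
    intro u v w hu hv hw huv huw hvw p hp hlen hws
    obtain ⟨i, hui⟩ := Set.mem_iUnion.mp hu
    obtain ⟨j, hvj⟩ := Set.mem_iUnion.mp hv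
    obtain ⟨l, hwl⟩ := Set.mem_iUnion.mp hw
    have hq := SimpleGraph.dist_le (p.takeUntil w hws)
    have hr := SimpleGraph.dist_le (p.dropUntil w hws)
    have hlen2 : (p.takeUntil w hws).length + (p.dropUntil w hws).length = p.length := by
      have := congrArg SimpleGraph.Walk.length (p.take_spec hws)
      rwa [SimpleGraph.Walk.length_append] at this
    have hle2 : G.dist u v ≤ 2 := hdist2 i j u v hui hvj
    have h1 : 1 ≤ G.dist u w := by
      rcases Nat.eq_zero_or_pos (G.dist u w) with h | h
      · rw [SimpleGraph.dist_eq_zero_iff_eq_or_not_reachable] at h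
        rcases h with h | h
        · exact absurd h huw
        · exact absurd (p.takeUntil w hws).reachable h
      · exact h
    have h2 : 1 ≤ G.dist w v := by
      rcases Nat.eq_zero_or_pos (G.dist w v) with h | h
      · rw [SimpleGraph.dist_eq_zero_iff_eq_or_not_reachable] at h
        rcases h with h | h
        · exact absurd h.symm hvw
        · exact absurd (p.dropUntil w hws).reachable h
      · exact h
    have huw1 : G.dist u w = 1 := by omega
    have hwv1 : G.dist w v = 1 := by omega
    have huv2 : G.dist u v = 2 := by omega
    have hAuw : G.Adj u w := SimpleGraph.dist_eq_one_iff_adj.mp huw1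
    have hAwv : G.Adj w v := SimpleGraph.dist_eq_one_iff_adj.mp hwv1
    have hij : i ≠ j := by
      intro h
      subst h
      have := SimpleGraph.dist_eq_one_iff_adj.mpr (hadj_same i u v hui hvj huv)
      omega
    have hli : l = i := hclass l i w u hwl hui hAuw.symm
    have hlj : l = j := hclass l j w v hwl hvj hAwv
    exact hij (hli ▸ hlj)
  · set T : Fin k → Finset (Π i, Fin (n i)) :=
      fun i => Finset.univ.filter (fun v => v ∈ S i) with hT
    have hTS : ∀ i v, v ∈ T i ↔ v ∈ S i := by
      intro i v; simp [hT]
    have hXT : X = ↑(Finset.univ.biUnion T) := by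
      rw [hXS]
      ext v
      simp only [Set.mem_iUnion, Finset.coe_biUnion, Finset.mem_coe,
        Set.mem_iUnion, Finset.mem_univ, Set.iUnion_true]
      exact exists_congr fun i => (hTS i v).symm
    have hdisj : ∀ i ∈ (Finset.univ : Finset (Fin k)), ∀ j ∈ Finset.univ,
        i ≠ j → Disjoint (T i) (T j) := by
      intro i _ j _ hij
      rw [Finset.disjoint_left]
      intro v hvi hvj
      exact ((hTS i v).mp hvi).1 (((hTS j v).mp hvj).2 i hij)
    have hcard : ∀ i, (T i).card = n i - 1 := by
      intro i
      have hbij : (T i).card = (Finset.univ.erase (z i)).card := by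
        refine Finset.card_bij' (fun v _ => v i) (fun a _ => Function.update z i a)
          ?_ ?_ ?_ ?_
        · intro v hv
          refine Finset.mem_erase.mpr ⟨?_, Finset.mem_univ _⟩
          intro h
          exact ((hTS i v).mp hv).1 (by rw [h])
        · intro a ha
          refine (hTS i _).mpr ⟨?_, ?_⟩
          · rw [Function.update_self]
            intro h
            exact (Finset.mem_erase.mp ha).1 (Fin.ext h)
          · intro j hj
            rw [Function.update_of_ne hj]
        · intro v hv
          funext j
          by_cases hj : j = i
          · subst hj; rw [Function.update_self]
          · rw [Function.update_of_ne hj]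
            exact (Fin.ext (((hTS i v).mp hv).2 j hj).symm)
        · intro a _
          exact Function.update_self i a z
      rw [hbij, Finset.card_erase_of_mem (Finset.mem_univ _), Finset.card_univ,
        Fintype.card_fin]
    rw [hXT, Set.ncard_coe_finset, Finset.card_biUnion hdisj]
    have hsum : ∑ i, (T i).card + ∑ _i : Fin k, 1 = ∑ i, n i := by
      rw [← Finset.sum_add_distrib]
      refine Finset.sum_congr rfl fun i _ => ?_
      rw [hcard i]
      have := hn i
      omega
    have hk' : ∑ _i : Fin k, 1 = k := by simp
    omega
end

section
/- If G is a finite connected graph with diameter 2, then gp(G) = ρ(G). -/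
section Aux

open SimpleGraph

variable {V : Type*} {G : SimpleGraph V} {u v : V}

private lemma two_le_edist_iff' : 2 ≤ G.edist u v ↔ u ≠ v ∧ ¬ G.Adj u v := by
  constructor
  · intro h
    refine ⟨?_, ?_⟩
    · rintro rfl; simp [SimpleGraph.edist_self] at h
    · intro hadj
      rw [← SimpleGraph.edist_eq_one_iff_adj] at hadj
      rw [hadj] at h
      norm_num at h
  · rintro ⟨hne, hadj⟩
    by_contra h
    push_neg at h
    have h1 : G.edist u v ≤ 1 := by
      have : G.edist u v < 1 + 1 := by rw [one_add_one_eq_two]; exact h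
      exact Order.le_of_lt_add_one this
    have h0 : 0 < G.edist u v := G.edist_pos_of_ne hne
    have : G.edist u v = 1 := le_antisymm h1 (Order.one_le_iff_pos.mpr h0)
    exact hadj (edist_eq_one_iff_adj.mp this)

private lemma dist_le_two' (hdiam : G.ediam = 2) (u v : V) : G.dist u v ≤ 2 := by
  have h : G.edist u v ≤ 2 := hdiam ▸ edist_le_ediam
  have := ENat.toNat_le_toNat h (by simp)
  simpa [SimpleGraph.dist] using this

private lemma dist_eq_two' (hconn : G.Connected) (hdiam : G.ediam = 2)
    (hne : u ≠ v) (hadj : ¬ G.Adj u v) : G.dist u v = 2 := by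
  have h2 := dist_le_two' hdiam u v
  have h0 : 0 < G.dist u v := (hconn u v).pos_dist_of_ne hne
  have h1 : G.dist u v ≠ 1 := fun h => hadj (dist_eq_one_iff_adj.mp h)
  omega

end Aux

/-- If `G` is a finite connected graph with diameter `2`, then
`gp(G) = ρ(G)`. -/
theorem gpNumber_eq_rho_of_diam_two {V : Type*} [Fintype V] (G : SimpleGraph V)
    (hconn : G.Connected) (hdiam : G.ediam = 2) :
    G.gpNumber = G.rho := by
  classical
  unfold SimpleGraph.gpNumber SimpleGraph.rho
  congr 1
  ext n
  simp only [Set.mem_setOf_eq]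
  constructor
  · -- GP set gives union of independent cliques
    rintro ⟨S, hS, rfl⟩
    -- P3-freeness inside S
    have p3 : ∀ a ∈ S, ∀ b ∈ S, ∀ c ∈ S, G.Adj a b → G.Adj a c → b ≠ c → G.Adj b c := by
      intro a ha b hb c hc hab hac hbc
      by_contra hn
      have hd : G.dist b c = 2 := dist_eq_two' hconn hdiam hbc hn
      set p : G.Walk b c := SimpleGraph.Walk.cons hab.symm (SimpleGraph.Walk.cons hac .nil) with hpdef
      have hp : p.IsPath := by
        rw [SimpleGraph.Walk.isPath_def]
        simp [hpdef, hab.ne', hbc, hac.ne]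
      have hlen : p.length = G.dist b c := by simp [hpdef, hd]
      have := hS hb hc ha hbc hab.ne' hac.ne' p hp hlen
      simp [hpdef] at this
    set F : Finset V := S.toFinite.toFinset with hF
    set Q : V → Finset V := fun a => F.filter (fun v => v = a ∨ G.Adj a v) with hQ
    have memQ : ∀ a x, x ∈ Q a ↔ x ∈ S ∧ (x = a ∨ G.Adj a x) := by
      intro a x; simp [hQ, hF, Set.Finite.mem_toFinset]
    have Qsub : ∀ a ∈ S, ∀ b ∈ S, (a = b ∨ G.Adj a b) → Q a ⊆ Q b := by
      intro a ha b hb hab x hx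
      rw [memQ] at hx ⊢
      obtain ⟨hxS, hx⟩ := hx
      refine ⟨hxS, ?_⟩
      rcases hab with rfl | hab
      · exact hx
      rcases hx with rfl | hax
      · exact Or.inr hab.symm
      by_cases hxb : x = b
      · exact Or.inl hxb
      · exact Or.inr (p3 a ha b hb x hxS hab hax (fun h => hxb h.symm))
    have Qeq : ∀ a ∈ S, ∀ b ∈ S, (a = b ∨ G.Adj a b) → Q a = Q b := by
      intro a ha b hb hab
      refine le_antisymm (Qsub a ha b hb hab) (Qsub b hb a ha ?_)
      rcases hab with rfl | hab
      · exact Or.inl rfl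
      · exact Or.inr hab.symm
    refine ⟨F.image Q, ?_, ?_, ?_⟩
    · -- cliques
      intro Qq hQq
      obtain ⟨a, haF, rfl⟩ := Finset.mem_image.mp hQq
      have haS : a ∈ S := (Set.Finite.mem_toFinset _).mp haF
      intro x hx y hy hxy
      rw [Finset.mem_coe, memQ] at hx hy
      obtain ⟨hxS, hx⟩ := hx
      obtain ⟨hyS, hy⟩ := hy
      rcases hx with rfl | hax
      · rcases hy with rfl | hay
        · exact absurd rfl hxy
        · exact hay
      · rcases hy with rfl | hay
        · exact hax.symm
        · exact p3 a haS x hxS y hyS hax hay hxy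
    · -- independence
      intro Qa hQa Qb hQb hne x hx y hy
      obtain ⟨a, haF, rfl⟩ := Finset.mem_image.mp hQa
      obtain ⟨b, hbF, rfl⟩ := Finset.mem_image.mp hQb
      have haS : a ∈ S := (Set.Finite.mem_toFinset _).mp haF
      have hbS : b ∈ S := (Set.Finite.mem_toFinset _).mp hbF
      rw [memQ] at hx hy
      obtain ⟨hxS, hx⟩ := hx
      obtain ⟨hyS, hy⟩ := hy
      rw [two_le_edist_iff']
      by_contra hcon
      have hxy : x = y ∨ G.Adj x y := by tauto
      apply hne
      have hax : Q a = Q x := Qeq a haS x hxS (by rcases hx with rfl | h; exacts [Or.inl rfl, Or.inr h])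
      have hby : Q b = Q y := Qeq b hbS y hyS (by rcases hy with rfl | h; exacts [Or.inl rfl, Or.inr h])
      rw [hax, hby, Qeq x hxS y hyS hxy]
    · -- cardinality
      have hU : (⋃ Qq ∈ F.image Q, (Qq : Set V)) = S := by
        ext x
        simp only [Set.mem_iUnion, Finset.mem_coe, exists_prop]
        constructor
        · rintro ⟨Qq, hQq, hx⟩
          obtain ⟨a, haF, rfl⟩ := Finset.mem_image.mp hQq
          exact ((memQ a x).mp hx).1
        · intro hx
          exact ⟨Q x, Finset.mem_image_of_mem Q ((Set.Finite.mem_toFinset _).mpr hx),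
            (memQ x x).mpr ⟨hx, Or.inl rfl⟩⟩
      rw [hU]
  · -- union of independent cliques is a GP set
    rintro ⟨𝒬, hclique, hindep, rfl⟩
    refine ⟨⋃ Qq ∈ 𝒬, (Qq : Set V), ?_, rfl⟩
    intro u v w hu hv hw huv huw hvw p hp hlen hwsup
    -- w splits the geodesic
    have hsum : (p.takeUntil w hwsup).length + (p.dropUntil w hwsup).length = p.length := by
      have := congrArg SimpleGraph.Walk.length (p.take_spec hwsup)
      rwa [SimpleGraph.Walk.length_append] at this
    have h1 : G.dist u w ≤ (p.takeUntil w hwsup).length := SimpleGraph.dist_le _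
    have h2 : G.dist w v ≤ (p.dropUntil w hwsup).length := SimpleGraph.dist_le _
    have hd2 : G.dist u v ≤ 2 := dist_le_two' hdiam u v
    have hd1 : 0 < G.dist u w := (hconn u w).pos_dist_of_ne huw
    have hd1' : 0 < G.dist w v := (hconn w v).pos_dist_of_ne (Ne.symm hvw)
    have huw1 : G.dist u w = 1 := by omega
    have hwv1 : G.dist w v = 1 := by omega
    have huv2 : G.dist u v = 2 := by omega
    have hadj_uw : G.Adj u w := SimpleGraph.dist_eq_one_iff_adj.mp huw1
    have hadj_wv : G.Adj w v := SimpleGraph.dist_eq_one_iff_adj.mp hwv1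
    have hnadj_uv : ¬ G.Adj u v := fun h => by
      rw [← SimpleGraph.dist_eq_one_iff_adj] at h; omega
    simp only [Set.mem_iUnion, Finset.mem_coe, exists_prop] at hu hv hw
    obtain ⟨Qu, hQu, hu⟩ := hu
    obtain ⟨Qv, hQv, hv⟩ := hv
    obtain ⟨Qw, hQw, hw⟩ := hw
    have hQuw : Qu = Qw := by
      by_contra hne
      exact (two_le_edist_iff'.mp (hindep Qu hQu Qw hQw hne u hu w hw)).2 hadj_uw
    have hQvw : Qv = Qw := by
      by_contra hne
      exact (two_le_edist_iff'.mp (hindep Qv hQv Qw hQw hne v hv w hw)).2 hadj_wv.symm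
    exact hnadj_uv (hclique Qw hQw (hQuw ▸ hu) (hQvw ▸ hv) huv)
end

section
/- If G and H are finite graphs, each with at least one vertex, then gp(G + H) = max{ω(G) + ω(H), η(G), η(H)}. -/
/-- The join `G + H` of two (disjoint) graphs: the disjoint union of `G` and
`H` together with all edges between a vertex of `G` and a vertex of `H`. -/
def graphJoin {α β : Type*} (G : SimpleGraph α) (H : SimpleGraph β) :
    SimpleGraph (α ⊕ β) where
  Adj x y := match x, y with
    | Sum.inl a, Sum.inl a' => G.Adj a a'
    | Sum.inr b, Sum.inr b' => H.Adj b b'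
    | _, _ => True
  symm := by
    constructor
    rintro (a | b) (a' | b') h <;> simp_all
    exacts [G.adj_symm h, H.adj_symm h]
  loopless := by
    constructor
    rintro (a | b) h <;> simp_all

section Aux

open Sum SimpleGraph

variable {α β : Type*} {G : SimpleGraph α} {H : SimpleGraph β}

lemma graphJoin_adj_inl_inr (a : α) (b : β) : (graphJoin G H).Adj (inl a) (inr b) := trivial

lemma graphJoin_adj_inr_inl (b : β) (a : α) : (graphJoin G H).Adj (inr b) (inl a) := trivial

lemma graphJoin_adj_inl_inl {a a' : α} : (graphJoin G H).Adj (inl a) (inl a') ↔ G.Adj a a' :=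
  Iff.rfl

lemma graphJoin_adj_inr_inr {b b' : β} : (graphJoin G H).Adj (inr b) (inr b') ↔ H.Adj b b' :=
  Iff.rfl

lemma walk_support_of_length_one {V : Type*} {G : SimpleGraph V} {u v : V} (p : G.Walk u v)
    (h : p.length = 1) : p.support = [u, v] := by
  cases p with
  | nil => simp at h
  | cons h' q =>
    cases q with
    | nil => simp
    | cons h'' r => simp [SimpleGraph.Walk.length_cons] at h

lemma walk_support_of_length_two {V : Type*} {G : SimpleGraph V} {u v : V} (p : G.Walk u v)
    (h : p.length = 2) :
    ∃ (x : V) (_ : G.Adj u x) (_ : G.Adj x v), p.support = [u, x, v] := by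
  cases p with
  | nil => simp at h
  | cons h' q =>
    cases q with
    | nil => simp at h
    | cons h'' r =>
      cases r with
      | nil => exact ⟨_, h', h'', by simp⟩
      | cons h''' t => simp [SimpleGraph.Walk.length_cons] at h

lemma graphJoin_dist_inl_inl [Nonempty β] {a a' : α} (hne : a ≠ a') (hna : ¬ G.Adj a a') :
    (graphJoin G H).dist (inl a) (inl a') = 2 := by
  obtain ⟨b⟩ := (inferInstance : Nonempty β)
  let p : (graphJoin G H).Walk (inl a) (inl a') :=
    .cons (graphJoin_adj_inl_inr a b) (.cons (graphJoin_adj_inr_inl b a') .nil)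
  have h2 : (graphJoin G H).dist (inl a) (inl a') ≤ 2 := by
    simpa [p] using SimpleGraph.dist_le p
  have h0 : (graphJoin G H).dist (inl a) (inl a') ≠ 0 := by
    rw [Ne, (p.reachable).dist_eq_zero_iff]
    simp [hne]
  have h1 : (graphJoin G H).dist (inl a) (inl a') ≠ 1 := by
    rw [Ne, SimpleGraph.dist_eq_one_iff_adj]
    exact hna
  omega

lemma graphJoin_dist_inr_inr [Nonempty α] {b b' : β} (hne : b ≠ b') (hna : ¬ H.Adj b b') :
    (graphJoin G H).dist (inr b) (inr b') = 2 := by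
  obtain ⟨a⟩ := (inferInstance : Nonempty α)
  let p : (graphJoin G H).Walk (inr b) (inr b') :=
    .cons (graphJoin_adj_inr_inl b a) (.cons (graphJoin_adj_inl_inr a b') .nil)
  have h2 : (graphJoin G H).dist (inr b) (inr b') ≤ 2 := by
    simpa [p] using SimpleGraph.dist_le p
  have h0 : (graphJoin G H).dist (inr b) (inr b') ≠ 0 := by
    rw [Ne, (p.reachable).dist_eq_zero_iff]
    simp [hne]
  have h1 : (graphJoin G H).dist (inr b) (inr b') ≠ 1 := by
    rw [Ne, SimpleGraph.dist_eq_one_iff_adj]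
    exact hna
  omega

lemma isGPSet_of_pairwise_adj {V : Type*} {G : SimpleGraph V} {S : Set V}
    (h : ∀ u ∈ S, ∀ v ∈ S, u ≠ v → G.Adj u v) : G.IsGPSet S := by
  intro u v w hu hv hw huv huw hvw p hp hlen hmem
  have hadj := h u hu v hv huv
  rw [SimpleGraph.dist_eq_one_iff_adj.mpr hadj] at hlen
  rw [walk_support_of_length_one p hlen] at hmem
  simp only [List.mem_cons, List.mem_singleton, List.not_mem_nil, or_false] at hmem
  rcases hmem with h' | h'
  · exact huw h'.symm
  · exact hvw h'.symm

lemma isGPSet_empty {V : Type*} {G : SimpleGraph V} : G.IsGPSet (∅ : Set V) := by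
  intro u v w hu
  exact absurd hu (Set.notMem_empty u)

lemma gpNumber_bddAbove {V : Type*} [Fintype V] {G : SimpleGraph V} :
    BddAbove {n | ∃ S : Set V, G.IsGPSet S ∧ n = S.ncard} := by
  refine ⟨Fintype.card V, ?_⟩
  rintro n ⟨S, -, rfl⟩
  simpa [Set.ncard_univ] using Set.ncard_le_ncard (Set.subset_univ S) Set.finite_univ

lemma le_gpNumber {V : Type*} [Fintype V] {G : SimpleGraph V} {S : Set V} (h : G.IsGPSet S) :
    S.ncard ≤ G.gpNumber :=
  le_csSup gpNumber_bddAbove ⟨S, h, rfl⟩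

lemma gpNumber_le {V : Type*} {G : SimpleGraph V} {m : ℕ}
    (h : ∀ S : Set V, G.IsGPSet S → S.ncard ≤ m) : G.gpNumber ≤ m := by
  refine csSup_le ⟨0, ∅, isGPSet_empty, by simp⟩ ?_
  rintro n ⟨S, hS, rfl⟩
  exact h S hS

lemma isCompleteMultipartite_induce_empty {V : Type*} (G : SimpleGraph V) :
    (G.induce (∅ : Set V)).IsCompleteMultipartite' := by
  intro x
  exact absurd x.2 (Set.notMem_empty _)

lemma eta_bddAbove {V : Type*} [Fintype V] {G : SimpleGraph V} :
    BddAbove {n | ∃ B : Set V, (Gᶜ.induce B).IsCompleteMultipartite' ∧ n = B.ncard} := by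
  refine ⟨Fintype.card V, ?_⟩
  rintro n ⟨B, -, rfl⟩
  simpa [Set.ncard_univ] using Set.ncard_le_ncard (Set.subset_univ B) Set.finite_univ

lemma le_eta {V : Type*} [Fintype V] {G : SimpleGraph V} {B : Set V}
    (hB : (Gᶜ.induce B).IsCompleteMultipartite') : B.ncard ≤ G.eta :=
  le_csSup eta_bddAbove ⟨B, hB, rfl⟩

lemma exists_eta_witness {V : Type*} [Fintype V] (G : SimpleGraph V) :
    ∃ B : Set V, (Gᶜ.induce B).IsCompleteMultipartite' ∧ G.eta = B.ncard := by
  have h : G.eta ∈ {n | ∃ B : Set V, (Gᶜ.induce B).IsCompleteMultipartite' ∧ n = B.ncard} :=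
    Nat.sSup_mem ⟨0, ∅, isCompleteMultipartite_induce_empty _, by simp⟩ eta_bddAbove
  exact h

lemma set_isClique_ncard_le_cliqueNum {V : Type*} [Fintype V] {G : SimpleGraph V} {A : Set V}
    (h : G.IsClique A) : A.ncard ≤ G.cliqueNum := by
  classical
  rw [Set.ncard_eq_toFinset_card' A]
  exact SimpleGraph.IsClique.card_le_cliqueNum (tc := by rwa [Set.coe_toFinset])

end Aux

section Aux2

open Sum SimpleGraph

variable {α β : Type*} {G : SimpleGraph α} {H : SimpleGraph β}

lemma induce_compl_adj {B : Set α} {x y : B} :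
    (Gᶜ.induce B).Adj x y ↔ (x : α) ≠ (y : α) ∧ ¬ G.Adj x y := by
  rw [SimpleGraph.comap_adj, SimpleGraph.compl_adj]; rfl

lemma isGPSet_inl_of_isCompleteMultipartite [Nonempty β] {B : Set α}
    (hB : (Gᶜ.induce B).IsCompleteMultipartite') :
    (graphJoin G H).IsGPSet (Sum.inl '' B) := by
  rintro u v w hu hv hw huv huw hvw p hp hlen hmem
  obtain ⟨a, ha, rfl⟩ := hu
  obtain ⟨a', ha', rfl⟩ := hv
  obtain ⟨a'', ha'', rfl⟩ := hw
  by_cases hadj : G.Adj a a'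
  · rw [SimpleGraph.dist_eq_one_iff_adj.mpr (graphJoin_adj_inl_inl.mpr hadj)] at hlen
    rw [walk_support_of_length_one p hlen] at hmem
    simp only [List.mem_cons, List.not_mem_nil, or_false] at hmem
    rcases hmem with h' | h'
    · exact huw h'.symm
    · exact hvw h'.symm
  · have hne : a ≠ a' := fun h => huv (by rw [h])
    rw [graphJoin_dist_inl_inl hne hadj] at hlen
    obtain ⟨x, h1, h2, hsupp⟩ := walk_support_of_length_two p hlen
    rw [hsupp] at hmem
    simp only [List.mem_cons, List.not_mem_nil, or_false] at hmem
    rcases hmem with h' | h' | h'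
    · exact huw h'.symm
    · subst h'
      have hadj1 : G.Adj a a'' := graphJoin_adj_inl_inl.mp h1
      have hadj2 : G.Adj a'' a' := graphJoin_adj_inl_inl.mp h2
      have hxy : ¬ (Gᶜ.induce B).Adj ⟨a, ha⟩ ⟨a'', ha''⟩ := by
        rw [induce_compl_adj]
        exact fun hc => hc.2 hadj1
      have hyz : ¬ (Gᶜ.induce B).Adj ⟨a'', ha''⟩ ⟨a', ha'⟩ := by
        rw [induce_compl_adj]
        exact fun hc => hc.2 hadj2
      exact hB hxy hyz (induce_compl_adj.mpr ⟨hne, hadj⟩)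
    · exact hvw h'.symm

lemma induce_compl_adj' {B : Set β} {x y : B} :
    (Hᶜ.induce B).Adj x y ↔ (x : β) ≠ (y : β) ∧ ¬ H.Adj x y := by
  rw [SimpleGraph.comap_adj, SimpleGraph.compl_adj]; rfl

lemma isGPSet_inr_of_isCompleteMultipartite [Nonempty α] {B : Set β}
    (hB : (Hᶜ.induce B).IsCompleteMultipartite') :
    (graphJoin G H).IsGPSet (Sum.inr '' B) := by
  rintro u v w hu hv hw huv huw hvw p hp hlen hmem
  obtain ⟨b, hb, rfl⟩ := hu
  obtain ⟨b', hb', rfl⟩ := hv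
  obtain ⟨b'', hb'', rfl⟩ := hw
  by_cases hadj : H.Adj b b'
  · rw [SimpleGraph.dist_eq_one_iff_adj.mpr (graphJoin_adj_inr_inr.mpr hadj)] at hlen
    rw [walk_support_of_length_one p hlen] at hmem
    simp only [List.mem_cons, List.not_mem_nil, or_false] at hmem
    rcases hmem with h' | h'
    · exact huw h'.symm
    · exact hvw h'.symm
  · have hne : b ≠ b' := fun h => huv (by rw [h])
    rw [graphJoin_dist_inr_inr hne hadj] at hlen
    obtain ⟨x, h1, h2, hsupp⟩ := walk_support_of_length_two p hlen
    rw [hsupp] at hmem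
    simp only [List.mem_cons, List.not_mem_nil, or_false] at hmem
    rcases hmem with h' | h' | h'
    · exact huw h'.symm
    · subst h'
      have hadj1 : H.Adj b b'' := graphJoin_adj_inr_inr.mp h1
      have hadj2 : H.Adj b'' b' := graphJoin_adj_inr_inr.mp h2
      have hxy : ¬ (Hᶜ.induce B).Adj ⟨b, hb⟩ ⟨b'', hb''⟩ := by
        rw [induce_compl_adj']
        exact fun hc => hc.2 hadj1
      have hyz : ¬ (Hᶜ.induce B).Adj ⟨b'', hb''⟩ ⟨b', hb'⟩ := by
        rw [induce_compl_adj']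
        exact fun hc => hc.2 hadj2
      exact hB hxy hyz (induce_compl_adj'.mpr ⟨hne, hadj⟩)
    · exact hvw h'.symm

end Aux2

/-- If `G` and `H` are finite graphs, each with at least one vertex, then
`gp(G + H) = max {ω(G) + ω(H), η(G), η(H)}`. -/
theorem gpNumber_graphJoin_eq_max_eta {α β : Type*} [Fintype α] [Fintype β]
    [Nonempty α] [Nonempty β] (G : SimpleGraph α) (H : SimpleGraph β) :
    (graphJoin G H).gpNumber = max (G.cliqueNum + H.cliqueNum) (max G.eta H.eta) := by
  classical
  apply le_antisymm
  · apply gpNumber_le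
    intro S hS
    set A : Set α := Sum.inl ⁻¹' S with hAdef
    set B : Set β := Sum.inr ⁻¹' S with hBdef
    have hSeq : S = Sum.inl '' A ∪ Sum.inr '' B := by
      ext x
      cases x with
      | inl a => simp [hAdef]
      | inr b => simp [hBdef]
    have hdisj : Disjoint (Sum.inl '' A) (Sum.inr '' B : Set (α ⊕ β)) := by
      rw [Set.disjoint_left]
      rintro x ⟨a, -, rfl⟩ ⟨b, -, h⟩
      exact Sum.inl_ne_inr h.symm
    have hcard : S.ncard = A.ncard + B.ncard := by
      rw [hSeq, Set.ncard_union_eq hdisj (Set.toFinite _) (Set.toFinite _),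
        Set.ncard_image_of_injective _ Sum.inl_injective,
        Set.ncard_image_of_injective _ Sum.inr_injective]
    by_cases hBe : B = ∅
    · have hcmp : (Gᶜ.induce A).IsCompleteMultipartite' := by
        intro x y z hxy hyz hxz
        obtain ⟨hnexz, hnadjxz⟩ := induce_compl_adj.mp hxz
        have hxy' : (x : α) = (y : α) ∨ G.Adj x y := by
          by_contra h
          push_neg at h
          exact hxy (induce_compl_adj.mpr ⟨h.1, h.2⟩)
        have hyz' : (y : α) = (z : α) ∨ G.Adj y z := by
          by_contra h
          push_neg at h
          exact hyz (induce_compl_adj.mpr ⟨h.1, h.2⟩)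
        rcases hxy' with h1 | h1
        · rcases hyz' with h2 | h2
          · exact hnexz (h1.trans h2)
          · exact hnadjxz (h1 ▸ h2)
        · rcases hyz' with h2 | h2
          · exact hnadjxz (h2 ▸ h1)
          · have hu : Sum.inl (x : α) ∈ S := x.2
            have hv : Sum.inl (z : α) ∈ S := z.2
            have hw : Sum.inl (y : α) ∈ S := y.2
            have h1' : (graphJoin G H).Adj (Sum.inl (x : α)) (Sum.inl (y : α)) :=
              graphJoin_adj_inl_inl.mpr h1
            have h2' : (graphJoin G H).Adj (Sum.inl (y : α)) (Sum.inl (z : α)) :=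
              graphJoin_adj_inl_inl.mpr h2
            let p : (graphJoin G H).Walk (Sum.inl (x : α)) (Sum.inl (z : α)) :=
              .cons h1' (.cons h2' .nil)
            have hsupp : p.support = [Sum.inl (x : α), Sum.inl (y : α), Sum.inl (z : α)] := rfl
            have hpath : p.IsPath := by
              rw [SimpleGraph.Walk.isPath_def, hsupp]
              simp [h1.ne, h2.ne, hnexz]
            have hlen : p.length = (graphJoin G H).dist (Sum.inl (x : α)) (Sum.inl (z : α)) := by
              rw [graphJoin_dist_inl_inl hnexz hnadjxz]
              rfl
            refine hS hu hv hw (fun hc => hnexz (Sum.inl_injective hc))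
              (fun hc => h1.ne (Sum.inl_injective hc))
              (fun hc => h2.ne (Sum.inl_injective hc).symm) p hpath hlen ?_
            rw [hsupp]
            simp
      have hle : S.ncard ≤ G.eta := by
        have h := le_eta hcmp
        rw [hcard, hBe]
        simpa using h
      exact le_trans hle (le_max_of_le_right (le_max_left _ _))
    · by_cases hAe : A = ∅
      · have hcmp : (Hᶜ.induce B).IsCompleteMultipartite' := by
          intro x y z hxy hyz hxz
          obtain ⟨hnexz, hnadjxz⟩ := induce_compl_adj'.mp hxz
          have hxy' : (x : β) = (y : β) ∨ H.Adj x y := by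
            by_contra h
            push_neg at h
            exact hxy (induce_compl_adj'.mpr ⟨h.1, h.2⟩)
          have hyz' : (y : β) = (z : β) ∨ H.Adj y z := by
            by_contra h
            push_neg at h
            exact hyz (induce_compl_adj'.mpr ⟨h.1, h.2⟩)
          rcases hxy' with h1 | h1
          · rcases hyz' with h2 | h2
            · exact hnexz (h1.trans h2)
            · exact hnadjxz (h1 ▸ h2)
          · rcases hyz' with h2 | h2
            · exact hnadjxz (h2 ▸ h1)
            · have hu : Sum.inr (x : β) ∈ S := x.2
              have hv : Sum.inr (z : β) ∈ S := z.2
              have hw : Sum.inr (y : β) ∈ S := y.2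
              have h1' : (graphJoin G H).Adj (Sum.inr (x : β)) (Sum.inr (y : β)) :=
                graphJoin_adj_inr_inr.mpr h1
              have h2' : (graphJoin G H).Adj (Sum.inr (y : β)) (Sum.inr (z : β)) :=
                graphJoin_adj_inr_inr.mpr h2
              let p : (graphJoin G H).Walk (Sum.inr (x : β)) (Sum.inr (z : β)) :=
                .cons h1' (.cons h2' .nil)
              have hsupp : p.support = [Sum.inr (x : β), Sum.inr (y : β), Sum.inr (z : β)] := rfl
              have hpath : p.IsPath := by
                rw [SimpleGraph.Walk.isPath_def, hsupp]
                simp [h1.ne, h2.ne, hnexz]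
              have hlen : p.length = (graphJoin G H).dist (Sum.inr (x : β)) (Sum.inr (z : β)) := by
                rw [graphJoin_dist_inr_inr hnexz hnadjxz]
                rfl
              refine hS hu hv hw (fun hc => hnexz (Sum.inr_injective hc))
                (fun hc => h1.ne (Sum.inr_injective hc))
                (fun hc => h2.ne (Sum.inr_injective hc).symm) p hpath hlen ?_
              rw [hsupp]
              simp
        have hle : S.ncard ≤ H.eta := by
          have h := le_eta hcmp
          rw [hcard, hAe]
          simpa using h
        exact le_trans hle (le_max_of_le_right (le_max_right _ _))
      · obtain ⟨b0, hb0⟩ := Set.nonempty_iff_ne_empty.mpr hBe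
        obtain ⟨a0, ha0⟩ := Set.nonempty_iff_ne_empty.mpr hAe
        have hAc : G.IsClique A := by
          intro a ha a' ha' hne
          by_contra hnadj
          have h1' : (graphJoin G H).Adj (Sum.inl a) (Sum.inr b0) := trivial
          have h2' : (graphJoin G H).Adj (Sum.inr b0) (Sum.inl a') := trivial
          let p : (graphJoin G H).Walk (Sum.inl a) (Sum.inl a') := .cons h1' (.cons h2' .nil)
          have hsupp : p.support = [Sum.inl a, Sum.inr b0, Sum.inl a'] := rfl
          have hpath : p.IsPath := by
            rw [SimpleGraph.Walk.isPath_def, hsupp]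
            simp [hne]
          have hlen : p.length = (graphJoin G H).dist (Sum.inl a) (Sum.inl a') := by
            rw [graphJoin_dist_inl_inl hne hnadj]
            rfl
          refine hS ha ha' hb0 (fun hc => hne (Sum.inl_injective hc))
            (fun hc => Sum.inl_ne_inr hc) (fun hc => Sum.inl_ne_inr hc) p hpath hlen ?_
          rw [hsupp]
          simp
        have hBc : H.IsClique B := by
          intro b hb b' hb' hne
          by_contra hnadj
          have h1' : (graphJoin G H).Adj (Sum.inr b) (Sum.inl a0) := trivial
          have h2' : (graphJoin G H).Adj (Sum.inl a0) (Sum.inr b') := trivial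
          let p : (graphJoin G H).Walk (Sum.inr b) (Sum.inr b') := .cons h1' (.cons h2' .nil)
          have hsupp : p.support = [Sum.inr b, Sum.inl a0, Sum.inr b'] := rfl
          have hpath : p.IsPath := by
            rw [SimpleGraph.Walk.isPath_def, hsupp]
            simp [hne]
          have hlen : p.length = (graphJoin G H).dist (Sum.inr b) (Sum.inr b') := by
            rw [graphJoin_dist_inr_inr hne hnadj]
            rfl
          refine hS hb hb' ha0 (fun hc => hne (Sum.inr_injective hc))
            (fun hc => Sum.inr_ne_inl hc) (fun hc => Sum.inr_ne_inl hc) p hpath hlen ?_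
          rw [hsupp]
          simp
        have hle : S.ncard ≤ G.cliqueNum + H.cliqueNum := by
          rw [hcard]
          exact Nat.add_le_add (set_isClique_ncard_le_cliqueNum hAc)
            (set_isClique_ncard_le_cliqueNum hBc)
        exact le_trans hle (le_max_left _ _)
  · rw [max_le_iff, max_le_iff]
    refine ⟨?_, ?_, ?_⟩
    · obtain ⟨Cg, hCg⟩ := G.exists_isNClique_cliqueNum
      obtain ⟨Ch, hCh⟩ := H.exists_isNClique_cliqueNum
      have hgp : (graphJoin G H).IsGPSet (Sum.inl '' ↑Cg ∪ Sum.inr '' ↑Ch) := by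
        apply isGPSet_of_pairwise_adj
        rintro u (⟨a, ha, rfl⟩ | ⟨b, hb, rfl⟩) v (⟨a', ha', rfl⟩ | ⟨b', hb', rfl⟩) hne
        · exact graphJoin_adj_inl_inl.mpr
            (hCg.isClique ha ha' (fun hc => hne (by rw [hc])))
        · exact trivial
        · exact trivial
        · exact graphJoin_adj_inr_inr.mpr
            (hCh.isClique hb hb' (fun hc => hne (by rw [hc])))
      have hdisj : Disjoint (Sum.inl '' (↑Cg : Set α)) (Sum.inr '' (↑Ch : Set β) : Set (α ⊕ β)) := by
        rw [Set.disjoint_left]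
        rintro x ⟨a, -, rfl⟩ ⟨b, -, h⟩
        exact Sum.inl_ne_inr h.symm
      have hcard : (Sum.inl '' (↑Cg : Set α) ∪ Sum.inr '' (↑Ch : Set β) : Set (α ⊕ β)).ncard
          = G.cliqueNum + H.cliqueNum := by
        rw [Set.ncard_union_eq hdisj (Set.toFinite _) (Set.toFinite _),
          Set.ncard_image_of_injective _ Sum.inl_injective,
          Set.ncard_image_of_injective _ Sum.inr_injective,
          Set.ncard_coe_finset, Set.ncard_coe_finset, hCg.card_eq, hCh.card_eq]
      calc G.cliqueNum + H.cliqueNum = _ := hcard.symm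
        _ ≤ _ := le_gpNumber hgp
    · obtain ⟨B, hB, hBcard⟩ := exists_eta_witness G
      have h := le_gpNumber (isGPSet_inl_of_isCompleteMultipartite (H := H) hB)
      rwa [Set.ncard_image_of_injective _ Sum.inl_injective, ← hBcard] at h
    · obtain ⟨B, hB, hBcard⟩ := exists_eta_witness H
      have h := le_gpNumber (isGPSet_inr_of_isCompleteMultipartite (G := G) hB)
      rwa [Set.ncard_image_of_injective _ Sum.inr_injective, ← hBcard] at h
end

section
/- If G is a finite connected graph with n(G) ≥ 2 vertices and H is a finite graph with at least one vertex, then gp(G ∘ H) = n(G) · ρ(H). -/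
/-- The corona `G ∘ H`: the disjoint union of `G` and one copy of `H` for each
vertex `v` of `G` (the vertex `b` in the copy attached at `v` is `(v, b)`),
where each `v ∈ V(G)` is joined to every vertex of its own copy of `H`. -/
def corona {α β : Type*} (G : SimpleGraph α) (H : SimpleGraph β) :
    SimpleGraph (α ⊕ α × β) where
  Adj x y := match x, y with
    | Sum.inl a, Sum.inl a' => G.Adj a a'
    | Sum.inl a, Sum.inr p => a = p.1
    | Sum.inr p, Sum.inl a => p.1 = a
    | Sum.inr p, Sum.inr p' => p.1 = p'.1 ∧ H.Adj p.2 p'.2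
  symm := by
    constructor
    rintro (a | p) (a' | p') h <;> simp_all
    exacts [G.adj_symm h, H.adj_symm h.2]
  loopless := by
    constructor
    rintro (a | p) h <;> simp_all

section CoronaAux

open SimpleGraph Sum

variable {α β : Type*} {G : SimpleGraph α} {H : SimpleGraph β}

lemma corona_adj_inl_inl {a a' : α} :
    (corona G H).Adj (inl a) (inl a') ↔ G.Adj a a' := Iff.rfl

lemma corona_adj_inl_inr {a : α} {p : α × β} :
    (corona G H).Adj (inl a) (inr p) ↔ a = p.1 := Iff.rfl

lemma corona_adj_inr_inl {a : α} {p : α × β} :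
    (corona G H).Adj (inr p) (inl a) ↔ p.1 = a := Iff.rfl

lemma corona_adj_inr_inr {p p' : α × β} :
    (corona G H).Adj (inr p) (inr p') ↔ p.1 = p'.1 ∧ H.Adj p.2 p'.2 := Iff.rfl

/-- The inclusion of `G` in the corona. -/
@[reducible] def coronaInl (G : SimpleGraph α) (H : SimpleGraph β) : G →g corona G H :=
  ⟨inl, fun h => h⟩

@[simp] lemma coronaInl_apply (G : SimpleGraph α) (H : SimpleGraph β) (a : α) :
    coronaInl G H a = inl a := rfl

lemma corona_connected (hG : G.Connected) : (corona G H).Connected := by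
  have hne : Nonempty α := hG.nonempty
  have key : ∀ x : α ⊕ α × β, (corona G H).Reachable x (inl (Sum.elim id Prod.fst x)) := by
    rintro (a | ⟨a, b⟩)
    · rfl
    · exact (Adj.reachable (corona_adj_inr_inl.mpr rfl))
  constructor
  intro x y
  refine (key x).trans (Reachable.trans ?_ (key y).symm)
  exact Reachable.map (coronaInl G H) (hG _ _)

private lemma walk_length_potential {V : Type*} {G : SimpleGraph V} (Φ : V → ℕ)
    (hΦ : ∀ ⦃x y⦄, G.Adj x y → Φ x ≤ Φ y + 1) {x y : V} (p : G.Walk x y) :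
    Φ x ≤ Φ y + p.length := by
  induction p with
  | nil => simp
  | cons h q ih => rw [Walk.length_cons]; have := hΦ h; omega

private lemma potential_le_dist {V : Type*} {G : SimpleGraph V} (hconn : G.Connected)
    (Φ : V → ℕ) (hΦ : ∀ ⦃x y⦄, G.Adj x y → Φ x ≤ Φ y + 1) {x y : V} (hy : Φ y = 0) :
    Φ x ≤ G.dist x y := by
  obtain ⟨p, hp⟩ := hconn.exists_walk_length_eq_dist x y
  have := walk_length_potential Φ hΦ p
  omega


open Classical in
/-- The distance potential toward the target `inr (a₀, b₀)`. -/
private noncomputable def Phi (G : SimpleGraph α) (H : SimpleGraph β)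
    (a₀ : α) (b₀ : β) : α ⊕ α × β → ℕ := fun x =>
  match x with
  | inl w => G.dist w a₀ + 1
  | inr (w, c) =>
      if w = a₀ then (if c = b₀ then 0 else if H.Adj c b₀ then 1 else 2)
      else G.dist w a₀ + 2

private lemma phi_lipschitz (hG : G.Connected) (a₀ : α) (b₀ : β) :
    ∀ ⦃x y⦄, (corona G H).Adj x y → Phi G H a₀ b₀ x ≤ Phi G H a₀ b₀ y + 1 := by
  classical
  have tri : ∀ w w' : α, G.Adj w w' → G.dist w a₀ ≤ G.dist w' a₀ + 1 := by
    intro w w' h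
    have h1 : G.dist w w' = 1 := dist_eq_one_iff_adj.mpr h
    have := hG.dist_triangle (u := w) (v := w') (w := a₀)
    omega
  rintro (w | ⟨w, c⟩) (w' | ⟨w', c'⟩) h
  · have := tri _ _ h
    simp only [Phi]; omega
  · have hw : w = w' := h
    subst hw
    by_cases hwa : w = a₀
    · subst hwa
      simp only [Phi, if_pos rfl, dist_self]
      split_ifs <;> omega
    · simp only [Phi, if_neg hwa]; omega
  · have hw : w = w' := h
    subst hw
    by_cases hwa : w = a₀
    · subst hwa
      simp only [Phi, if_pos rfl, dist_self]
      split_ifs <;> omega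
    · simp only [Phi, if_neg hwa]; omega
  · obtain ⟨hw, hadj⟩ : w = w' ∧ H.Adj c c' := h
    subst hw
    simp only [Phi]
    by_cases hwa : w = a₀
    · simp only [if_pos hwa]
      by_cases h1 : c = b₀
      · rw [if_pos h1]; exact Nat.zero_le _
      · by_cases h2 : c' = b₀
        · rw [if_neg h1, if_pos h2, if_pos (h2 ▸ hadj : H.Adj c b₀)]
        · rw [if_neg h1, if_neg h2]
          split_ifs <;> omega
    · simp [hwa]

lemma corona_dist_inl_inr (hG : G.Connected) (a a₀ : α) (b₀ : β) :
    (corona G H).dist (inl a) (inr (a₀, b₀)) = G.dist a a₀ + 1 := by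
  classical
  apply le_antisymm
  · obtain ⟨g, hgp, hgl⟩ := hG.exists_path_of_dist a a₀
    have hadj : (corona G H).Adj (inl a₀) (inr (a₀, b₀)) := rfl
    have := dist_le ((g.map (coronaInl G H)).concat hadj)
    simpa [Walk.length_concat, Walk.length_map, hgl] using this
  · have := potential_le_dist (corona_connected hG) (Phi G H a₀ b₀) (phi_lipschitz hG a₀ b₀)
      (x := inl a) (y := inr (a₀, b₀)) (by simp [Phi])
    simpa [Phi] using this

lemma corona_dist_inr_inr_ne (hG : G.Connected) {a a₀ : α} (hne : a ≠ a₀) (b b₀ : β) :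
    (corona G H).dist (inr (a, b)) (inr (a₀, b₀)) = G.dist a a₀ + 2 := by
  classical
  apply le_antisymm
  · obtain ⟨g, hgp, hgl⟩ := hG.exists_path_of_dist a a₀
    have hadj : (corona G H).Adj (inl a₀) (inr (a₀, b₀)) := rfl
    have hadj2 : (corona G H).Adj (inr (a, b)) (inl a) := rfl
    have := dist_le (Walk.cons hadj2 ((g.map (coronaInl G H)).concat hadj))
    simpa [Walk.length_concat, Walk.length_map, hgl] using this
  · have := potential_le_dist (corona_connected hG) (Phi G H a₀ b₀) (phi_lipschitz hG a₀ b₀)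
      (x := inr (a, b)) (y := inr (a₀, b₀)) (by simp [Phi])
    simpa [Phi, hne] using this

lemma corona_dist_inr_inr_nonadj (hG : G.Connected) {a : α} {b b₀ : β} (hne : b ≠ b₀)
    (hnadj : ¬ H.Adj b b₀) :
    (corona G H).dist (inr (a, b)) (inr (a, b₀)) = 2 := by
  classical
  apply le_antisymm
  · have hadj : (corona G H).Adj (inl a) (inr (a, b₀)) := rfl
    have hadj2 : (corona G H).Adj (inr (a, b)) (inl a) := rfl
    have := dist_le (Walk.cons hadj2 (Walk.cons hadj Walk.nil))
    simpa using this
  · have := potential_le_dist (corona_connected hG) (Phi G H a b₀) (phi_lipschitz hG a b₀)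
      (x := inr (a, b)) (y := inr (a, b₀)) (by simp [Phi])
    simpa [Phi, hne, hnadj] using this

lemma dist_add_dist_le_length {V : Type*} {G : SimpleGraph V} {x y w : V}
    (p : G.Walk x y) (h : w ∈ p.support) :
    G.dist x w + G.dist w y ≤ p.length := by
  classical
  have hspec := p.take_spec h
  have hl := congrArg Walk.length hspec
  rw [Walk.length_append] at hl
  have h1 := dist_le (p.takeUntil w h)
  have h2 := dist_le (p.dropUntil w h)
  omega

lemma two_le_edist_of {u u' : β} (hne : u ≠ u') (hnadj : ¬ H.Adj u u') :
    2 ≤ H.edist u u' := by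
  by_contra hlt
  push_neg at hlt
  have h0 : H.edist u u' ≠ 0 := fun h => hne (edist_eq_zero_iff.mp h)
  have h1 : H.edist u u' ≠ 1 := fun h => hnadj (edist_eq_one_iff_adj.mp h)
  have htop : H.edist u u' ≠ ⊤ := (lt_of_lt_of_le hlt le_top).ne
  lift H.edist u u' to ℕ using htop with n hn
  norm_cast at hlt h0 h1
  omega

variable [Fintype β]

lemma rho_set_bddAbove :
    BddAbove {n | ∃ 𝒬 : Finset (Finset β),
      (∀ Q ∈ 𝒬, H.IsClique (Q : Set β)) ∧
      (∀ Q ∈ 𝒬, ∀ Q' ∈ 𝒬, Q ≠ Q' → ∀ u ∈ Q, ∀ u' ∈ Q', 2 ≤ H.edist u u') ∧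
      n = (⋃ Q ∈ 𝒬, (Q : Set β)).ncard} := by
  refine ⟨Fintype.card β, ?_⟩
  rintro n ⟨𝒬, -, -, rfl⟩
  have := Set.ncard_le_ncard (Set.subset_univ (⋃ Q ∈ 𝒬, (Q : Set β))) Set.finite_univ
  simpa [Set.ncard_univ, Nat.card_eq_fintype_card] using this

lemma one_le_rho [Nonempty β] : 1 ≤ H.rho := by
  classical
  obtain ⟨b⟩ := (inferInstance : Nonempty β)
  apply le_csSup rho_set_bddAbove
  refine ⟨{{b}}, ?_, ?_, ?_⟩
  · intro Q hQ
    simp only [Finset.mem_singleton] at hQ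
    subst hQ
    simp [SimpleGraph.isClique_iff, Set.pairwise_singleton]
  · intro Q hQ Q' hQ' hne
    simp only [Finset.mem_singleton] at hQ hQ'
    exact absurd (hQ.trans hQ'.symm) hne
  · simp

lemma card_le_rho (T : Finset β)
    (hT : ∀ b ∈ T, ∀ u ∈ T, ∀ w ∈ T, H.Adj b u → H.Adj u w → b ≠ w → H.Adj b w) :
    T.card ≤ H.rho := by
  classical
  set R : β → β → Prop := fun u w => u = w ∨ H.Adj u w with hRdef
  have hRsymm : ∀ u w, R u w → R w u := by
    rintro u w (rfl | h)
    exacts [Or.inl rfl, Or.inr h.symm]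
  have hRtrans : ∀ b ∈ T, ∀ u ∈ T, ∀ w ∈ T, R b u → R u w → R b w := by
    rintro b hb u hu w hw (rfl | h1) h2
    · exact h2
    · rcases h2 with rfl | h2
      · exact Or.inr h1
      · by_cases hbw : b = w
        · exact Or.inl hbw
        · exact Or.inr (hT b hb u hu w hw h1 h2 hbw)
  set cls : β → Finset β := fun t => T.filter (fun u => R u t) with hclsdef
  have hmem : ∀ t u, u ∈ cls t ↔ u ∈ T ∧ R u t := by
    intro t u; simp [hclsdef]
  apply le_csSup rho_set_bddAbove
  refine ⟨T.image cls, ?_, ?_, ?_⟩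
  · intro Q hQ
    simp only [Finset.mem_image] at hQ
    obtain ⟨t, htT, rfl⟩ := hQ
    intro u hu u' hu' hne
    rw [Finset.mem_coe, hmem] at hu hu'
    have : R u u' := hRtrans u hu.1 t htT u' hu'.1 hu.2 (hRsymm _ _ hu'.2)
    rcases this with rfl | h
    · exact absurd rfl hne
    · exact h
  · intro Q hQ Q' hQ' hne u hu u' hu'
    simp only [Finset.mem_image] at hQ hQ'
    obtain ⟨t, htT, rfl⟩ := hQ
    obtain ⟨s, hsT, rfl⟩ := hQ'
    rw [hmem] at hu hu'
    have hnR : ¬ R u u' := by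
      intro hR'
      apply hne
      have hts : R t s := hRtrans t htT u hu.1 s hsT (hRsymm _ _ hu.2)
        (hRtrans u hu.1 u' hu'.1 s hsT hR' hu'.2)
      ext x
      simp only [hmem]
      constructor
      · rintro ⟨hx, hxt⟩
        exact ⟨hx, hRtrans x hx t htT s hsT hxt hts⟩
      · rintro ⟨hx, hxs⟩
        exact ⟨hx, hRtrans x hx s hsT t htT hxs (hRsymm _ _ hts)⟩
    exact two_le_edist_of (fun h => hnR (Or.inl h)) (fun h => hnR (Or.inr h))
  · have hUnion : (⋃ Q ∈ T.image cls, (Q : Set β)) = (T : Set β) := by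
      ext x
      simp only [Set.mem_iUnion, Finset.mem_coe, Finset.mem_image, exists_prop]
      constructor
      · rintro ⟨Q, ⟨t, htT, rfl⟩, hx⟩
        exact ((hmem t x).mp hx).1
      · intro hx
        exact ⟨cls x, ⟨x, hx, rfl⟩, (hmem x x).mpr ⟨hx, Or.inl rfl⟩⟩
    rw [hUnion, Set.ncard_coe_finset]

lemma union_property {𝒬 : Finset (Finset β)}
    (hclq : ∀ Q ∈ 𝒬, H.IsClique (Q : Set β))
    (hind : ∀ Q ∈ 𝒬, ∀ Q' ∈ 𝒬, Q ≠ Q' → ∀ u ∈ Q, ∀ u' ∈ Q', 2 ≤ H.edist u u')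
    {b w u : β} (hb : b ∈ ⋃ Q ∈ 𝒬, (Q : Set β)) (hw : w ∈ ⋃ Q ∈ 𝒬, (Q : Set β))
    (hu : u ∈ ⋃ Q ∈ 𝒬, (Q : Set β))
    (hbw : b ≠ w) (hnadj : ¬ H.Adj b w) (h1 : H.Adj u b) (h2 : H.Adj u w) : False := by
  simp only [Set.mem_iUnion, exists_prop] at hb hw hu
  obtain ⟨Qb, hQb, hbQ⟩ := hb
  obtain ⟨Qw, hQw, hwQ⟩ := hw
  obtain ⟨Qu, hQu, huQ⟩ := hu
  have key : ∀ Q ∈ 𝒬, ∀ Q' ∈ 𝒬, ∀ x ∈ Q, ∀ y ∈ Q', H.Adj x y → Q = Q' := by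
    intro Q hQ Q' hQ' x hx y hy hxy
    by_contra hne
    have := hind Q hQ Q' hQ' hne x hx y hy
    rw [edist_eq_one_iff_adj.mpr hxy] at this
    norm_num at this
  have e1 : Qu = Qb := key Qu hQu Qb hQb u (by exact_mod_cast huQ) b (by exact_mod_cast hbQ) h1
  have e2 : Qu = Qw := key Qu hQu Qw hQw u (by exact_mod_cast huQ) w (by exact_mod_cast hwQ) h2
  have hwb : w ∈ (Qb : Set β) := by rw [← e1, e2]; exact_mod_cast hwQ
  exact hnadj (hclq Qb hQb hbQ hwb hbw)

lemma gp_set_bddAbove {V : Type*} [Fintype V] (G : SimpleGraph V) :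
    BddAbove {n | ∃ S : Set V, G.IsGPSet S ∧ n = S.ncard} := by
  refine ⟨Fintype.card V, ?_⟩
  rintro n ⟨S, -, rfl⟩
  have := Set.ncard_le_ncard (Set.subset_univ S) Set.finite_univ
  simpa [Set.ncard_univ, Nat.card_eq_fintype_card] using this

omit [Fintype β] in
lemma gp_not_middle (hG : G.Connected) {S : Set (α ⊕ α × β)} (hS : (corona G H).IsGPSet S)
    {v : α} {b u w : β} (hb : inr (v, b) ∈ S) (hu : inr (v, u) ∈ S) (hw : inr (v, w) ∈ S)
    (h1 : H.Adj b u) (h2 : H.Adj u w) (hbw : b ≠ w) : H.Adj b w := by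
  by_contra hn
  have a1 : (corona G H).Adj (inr (v, b)) (inr (v, u)) := ⟨rfl, h1⟩
  have a2 : (corona G H).Adj (inr (v, u)) (inr (v, w)) := ⟨rfl, h2⟩
  set p := Walk.cons a1 (Walk.cons a2 Walk.nil) with hp
  have hbu : b ≠ u := h1.ne
  have huw : u ≠ w := h2.ne
  have hlen : p.length = (corona G H).dist (inr (v, b)) (inr (v, w)) := by
    rw [corona_dist_inr_inr_nonadj hG hbw hn]; simp [hp]
  have hpath : p.IsPath := by
    simp [hp, Walk.isPath_def, hbu, huw, hbw]
  have := hS hb hw hu (by simp [hbw]) (by simp [hbu]) (by simp [Ne.symm huw]) p hpath hlen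
  simp [hp] at this

omit [Fintype β] in
lemma gp_clique (hG : G.Connected) {S : Set (α ⊕ α × β)} (hS : (corona G H).IsGPSet S)
    {v : α} {b b' : β} (hv : inl v ∈ S) (hb : inr (v, b) ∈ S) (hb' : inr (v, b') ∈ S)
    (hne : b ≠ b') : H.Adj b b' := by
  by_contra hn
  have a1 : (corona G H).Adj (inr (v, b)) (inl v) := rfl
  have a2 : (corona G H).Adj (inl v) (inr (v, b')) := rfl
  set p := Walk.cons a1 (Walk.cons a2 Walk.nil) with hp
  have hlen : p.length = (corona G H).dist (inr (v, b)) (inr (v, b')) := by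
    rw [corona_dist_inr_inr_nonadj hG hne hn]; simp [hp]
  have hpath : p.IsPath := by simp [hp, Walk.isPath_def, hne]
  have := hS hb hb' hv (by simp [hne]) (by simp) (by simp) p hpath hlen
  simp [hp] at this

omit [Fintype β] in
lemma gp_confined_aux (hG : G.Connected) (v : α) (b' : β) (w : α) :
    ∃ q : (corona G H).Walk (inl w) (inr (v, b')), q.IsPath ∧
      q.length = G.dist w v + 1 ∧ inl v ∈ q.support ∧
      ∀ z ∈ q.support, z = inr (v, b') ∨ ∃ a, z = inl a := by
  classical
  obtain ⟨g, hgp, hgl⟩ := hG.exists_path_of_dist w v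
  have hadj : (corona G H).Adj (inl v) (inr (v, b')) := rfl
  refine ⟨(g.map (coronaInl G H)).concat hadj, ?_, ?_, ?_, ?_⟩
  · have hnodup : ((g.map (coronaInl G H)).support).Nodup := by
      rw [Walk.support_map]
      exact hgp.support_nodup.map Sum.inl_injective
    rw [Walk.isPath_def, Walk.support_concat, List.nodup_append]
    refine ⟨hnodup, List.nodup_singleton _, ?_⟩
    intro y hy z hy' hyz
    simp only [List.mem_singleton] at hy'
    subst hy'
    subst hyz
    rw [Walk.support_map] at hy
    obtain ⟨a, -, ha⟩ := List.mem_map.mp hy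
    exact Sum.inl_ne_inr ha
  · simp [Walk.length_concat, Walk.length_map, hgl]
  · rw [Walk.support_concat]
    exact List.mem_append.mpr (Or.inl (Walk.end_mem_support _))
  · intro z hz
    rw [Walk.support_concat, List.mem_append] at hz
    rcases hz with hz | hz
    · rw [Walk.support_map] at hz
      obtain ⟨a, -, rfl⟩ := List.mem_map.mp hz
      exact Or.inr ⟨a, rfl⟩
    · simp only [List.mem_singleton] at hz
      exact Or.inl hz

omit [Fintype β] in
lemma gp_confined (hG : G.Connected) {S : Set (α ⊕ α × β)} (hS : (corona G H).IsGPSet S)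
    {v : α} {b' : β} (hv : inl v ∈ S) (hb' : inr (v, b') ∈ S)
    {x : α ⊕ α × β} (hx : x ∈ S) (hxv : Sum.elim id Prod.fst x ≠ v) : False := by
  classical
  cases x with
  | inl w =>
    replace hxv : w ≠ v := hxv
    obtain ⟨q, hpath, hlenq, hmem, hsup⟩ := gp_confined_aux (H := H) hG v b' w
    have hlen : q.length = (corona G H).dist (inl w) (inr (v, b')) := by
      rw [corona_dist_inl_inr hG, hlenq]
    exact hS hx hb' hv (by simp) (by simp [hxv]) (by simp) q hpath hlen hmem
  | inr p =>
    obtain ⟨w, c⟩ := p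
    replace hxv : w ≠ v := hxv
    obtain ⟨q, hpath, hlenq, hmem, hsup⟩ := gp_confined_aux (H := H) hG v b' w
    have hadj2 : (corona G H).Adj (inr (w, c)) (inl w) := rfl
    have hnotin : inr (w, c) ∉ q.support := by
      intro hmem'
      rcases hsup _ hmem' with h | ⟨a, h⟩
      · rw [Sum.inr.injEq, Prod.ext_iff] at h
        exact hxv h.1
      · exact Sum.inr_ne_inl h
    have hlen : (Walk.cons hadj2 q).length
        = (corona G H).dist (inr (w, c)) (inr (v, b')) := by
      rw [corona_dist_inr_inr_ne hG hxv, Walk.length_cons, hlenq]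
    refine hS hx hb' hv ?_ ?_ ?_ (Walk.cons hadj2 q) (hpath.cons hnotin) hlen ?_
    · simp [Prod.ext_iff, hxv]
    · simp
    · simp
    · rw [Walk.support_cons]
      exact List.mem_cons_of_mem _ hmem

end CoronaAux
section Main
open SimpleGraph Sum

/-- If `G` is a finite connected graph with at least two vertices and `H` is a
finite graph with at least one vertex, then `gp(G ∘ H) = n(G) · ρ(H)`. -/
theorem gpNumber_corona {α β : Type*} [Fintype α] [Fintype β] [Nonempty β]
    (G : SimpleGraph α) (H : SimpleGraph β) (hG : G.Connected)
    (hcard : 2 ≤ Fintype.card α) :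
    (corona G H).gpNumber = Fintype.card α * H.rho := by
  classical
  have hC : (corona G H).Connected := corona_connected hG
  have hρpos : 1 ≤ H.rho := one_le_rho
  apply le_antisymm
  · -- gp ≤ n * ρ
    rw [SimpleGraph.gpNumber]
    apply csSup_le
    · exact ⟨0, ∅, fun u v w hu => absurd hu (Set.notMem_empty u), by simp⟩
    rintro n ⟨S, hS, rfl⟩
    by_cases hconf : ∃ v b', inl v ∈ S ∧ inr (v, b') ∈ S
    · obtain ⟨v, b₀, hv, hb₀⟩ := hconf
      set T : Set β := {c | inr (v, c) ∈ S} with hT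
      have hsub : S ⊆ insert (inl v) ((fun c => inr (v, c)) '' T) := by
        intro x hx
        by_cases hxv : Sum.elim id Prod.fst x = v
        · cases x with
          | inl w =>
            replace hxv : w = v := hxv
            subst hxv
            exact Set.mem_insert _ _
          | inr p =>
            obtain ⟨w, c⟩ := p
            replace hxv : w = v := hxv
            subst hxv
            exact Set.mem_insert_of_mem _ ⟨c, hx, rfl⟩
        · exact absurd (gp_confined hG hS hv hb₀ hx hxv) id
      have hTcard : T.ncard ≤ H.rho := by
        rw [Set.ncard_eq_toFinset_card T T.toFinite]
        apply card_le_rho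
        intro b hb u hu w hw h1 h2 hbw
        rw [Set.Finite.mem_toFinset] at hb hu hw
        exact gp_clique hG hS hv hb hw hbw
      calc S.ncard ≤ (insert (inl v) ((fun c => inr (v, c)) '' T)).ncard :=
            Set.ncard_le_ncard hsub (Set.toFinite _)
        _ ≤ ((fun c => inr (v, c)) '' T).ncard + 1 := Set.ncard_insert_le _ _
        _ = T.ncard + 1 := by
            rw [Set.ncard_image_of_injective _ (fun a b h => by simpa using h)]
        _ ≤ H.rho + 1 := by omega
        _ ≤ 2 * H.rho := by omega
        _ ≤ Fintype.card α * H.rho := Nat.mul_le_mul_right _ hcard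
    · push_neg at hconf
      set Sf := S.toFinite.toFinset with hSf
      rw [Set.ncard_eq_toFinset_card S S.toFinite, ← hSf]
      rw [Finset.card_eq_sum_card_fiberwise
        (f := Sum.elim id Prod.fst) (t := Finset.univ) (fun x _ => Finset.mem_univ _)]
      have hfib : ∀ v : α,
          (Sf.filter (fun x => Sum.elim id Prod.fst x = v)).card ≤ H.rho := by
        intro v
        by_cases hv : inl v ∈ S
        · have hss : Sf.filter (fun x => Sum.elim id Prod.fst x = v) ⊆ {inl v} := by
            intro x hx
            rw [Finset.mem_filter] at hx
            obtain ⟨hxS, hxv⟩ := hx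
            rw [hSf, Set.Finite.mem_toFinset] at hxS
            cases x with
            | inl w =>
              replace hxv : w = v := hxv
              subst hxv
              exact Finset.mem_singleton_self _
            | inr p =>
              obtain ⟨w, c⟩ := p
              replace hxv : w = v := hxv
              subst hxv
              exact absurd hxS (hconf _ c hv)
          calc _ ≤ ({inl v} : Finset (α ⊕ α × β)).card := Finset.card_le_card hss
            _ = 1 := Finset.card_singleton _
            _ ≤ H.rho := hρpos
        · set Tf := Finset.univ.filter (fun c => inr (v, c) ∈ S) with hTf
          have hcardle : (Sf.filter (fun x => Sum.elim id Prod.fst x = v)).card ≤ Tf.card := by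
            apply Finset.card_le_card_of_injOn (Sum.elim (fun _ => Classical.arbitrary β) Prod.snd)
            · intro x hx
              rw [Finset.mem_coe, Finset.mem_filter] at hx
              obtain ⟨hxS, hxv⟩ := hx
              rw [hSf, Set.Finite.mem_toFinset] at hxS
              cases x with
              | inl w =>
                replace hxv : w = v := hxv
                exact absurd (hxv ▸ hxS) hv
              | inr p =>
                obtain ⟨w, c⟩ := p
                replace hxv : w = v := hxv
                subst hxv
                rw [Finset.mem_coe, hTf, Finset.mem_filter]
                exact ⟨Finset.mem_univ _, hxS⟩
            · intro x hx y hy hxy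
              simp only [Finset.coe_filter, Set.mem_setOf_eq] at hx hy
              obtain ⟨hxS, hxv⟩ := hx
              obtain ⟨hyS, hyv⟩ := hy
              rw [hSf, Set.Finite.mem_toFinset] at hxS hyS
              cases x with
              | inl w => exact absurd ((show w = v from hxv) ▸ hxS) hv
              | inr p =>
                cases y with
                | inl w => exact absurd ((show w = v from hyv) ▸ hyS) hv
                | inr p' =>
                  obtain ⟨w, c⟩ := p
                  obtain ⟨w', c'⟩ := p'
                  replace hxv : w = v := hxv
                  replace hyv : w' = v := hyv
                  subst hxv; subst hyv
                  simp only [Sum.elim_inr] at hxy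
                  rw [hxy]
          have hTcard : Tf.card ≤ H.rho := by
            apply card_le_rho
            intro b hb u hu w hw h1 h2 hbw
            rw [hTf, Finset.mem_filter] at hb hu hw
            exact gp_not_middle hG hS hb.2 hu.2 hw.2 h1 h2 hbw
          omega
      calc _ ≤ ∑ _v : α, H.rho := Finset.sum_le_sum (fun v _ => hfib v)
        _ = Fintype.card α * H.rho := by
            rw [Finset.sum_const, Finset.card_univ, smul_eq_mul]
  · -- n * ρ ≤ gp
    have hne : {n | ∃ 𝒬 : Finset (Finset β),
        (∀ Q ∈ 𝒬, H.IsClique (Q : Set β)) ∧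
        (∀ Q ∈ 𝒬, ∀ Q' ∈ 𝒬, Q ≠ Q' → ∀ u ∈ Q, ∀ u' ∈ Q', 2 ≤ H.edist u u') ∧
        n = (⋃ Q ∈ 𝒬, (Q : Set β)).ncard}.Nonempty :=
      ⟨0, ∅, by simp, by simp, by simp⟩
    have hmem : H.rho ∈ {n | ∃ 𝒬 : Finset (Finset β),
        (∀ Q ∈ 𝒬, H.IsClique (Q : Set β)) ∧
        (∀ Q ∈ 𝒬, ∀ Q' ∈ 𝒬, Q ≠ Q' → ∀ u ∈ Q, ∀ u' ∈ Q', 2 ≤ H.edist u u') ∧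
        n = (⋃ Q ∈ 𝒬, (Q : Set β)).ncard} := by
      rw [SimpleGraph.rho]
      exact Nat.sSup_mem hne rho_set_bddAbove
    obtain ⟨𝒬, hclq, hind, hUcard⟩ := hmem
    set U : Set β := ⋃ Q ∈ 𝒬, (Q : Set β) with hU
    set Uf := U.toFinite.toFinset with hUf
    set Sfin := (Finset.univ ×ˢ Uf).image (inr : α × β → α ⊕ α × β) with hSfin
    have hmemS : ∀ y, y ∈ (Sfin : Set (α ⊕ α × β)) ↔ ∃ a c, c ∈ U ∧ y = inr (a, c) := by
      intro y
      simp only [hSfin, Finset.coe_image, Set.mem_image, Finset.mem_coe,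
        Finset.mem_product, Finset.mem_univ, true_and]
      constructor
      · rintro ⟨⟨a, c⟩, hc, rfl⟩
        rw [hUf, Set.Finite.mem_toFinset] at hc
        exact ⟨a, c, hc, rfl⟩
      · rintro ⟨a, c, hc, rfl⟩
        exact ⟨(a, c), by rw [hUf, Set.Finite.mem_toFinset]; exact hc, rfl⟩
    have hgp : (corona G H).IsGPSet (Sfin : Set (α ⊕ α × β)) := by
      intro u v w hu hv hw huv huw hvw p hp hlen
      rw [hmemS] at hu hv hw
      obtain ⟨v₁, b₁, hb₁U, rfl⟩ := hu
      obtain ⟨v₂, b₂, hb₂U, rfl⟩ := hv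
      obtain ⟨v₃, b₃, hb₃U, rfl⟩ := hw
      intro hsupp
      have hsplit := dist_add_dist_le_length p hsupp
      rw [hlen] at hsplit
      by_cases h12 : v₁ = v₂
      · subst h12
        have hbne : b₁ ≠ b₂ := by
          intro h; exact huv (by rw [h])
        have p1 : 1 ≤ (corona G H).dist (inr (v₁, b₁)) (inr (v₃, b₃)) :=
          hC.pos_dist_of_ne huw
        have p2 : 1 ≤ (corona G H).dist (inr (v₃, b₃)) (inr (v₁, b₂)) :=
          hC.pos_dist_of_ne (Ne.symm hvw)
        by_cases hadj : H.Adj b₁ b₂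
        · have hd : (corona G H).dist (inr (v₁, b₁)) (inr (v₁, b₂)) = 1 :=
            SimpleGraph.dist_eq_one_iff_adj.mpr ⟨rfl, hadj⟩
          omega
        · have hd : (corona G H).dist (inr (v₁, b₁)) (inr (v₁, b₂)) = 2 :=
            corona_dist_inr_inr_nonadj hG hbne hadj
          have e1 : (corona G H).dist (inr (v₁, b₁)) (inr (v₃, b₃)) = 1 := by omega
          have e2 : (corona G H).dist (inr (v₃, b₃)) (inr (v₁, b₂)) = 1 := by omega
          obtain ⟨he1, ha1⟩ := corona_adj_inr_inr.mp (SimpleGraph.dist_eq_one_iff_adj.mp e1)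
          obtain ⟨he2, ha2⟩ := corona_adj_inr_inr.mp (SimpleGraph.dist_eq_one_iff_adj.mp e2)
          exact union_property hclq hind hb₁U hb₂U hb₃U hbne hadj ha1.symm ha2
      · have hd : (corona G H).dist (inr (v₁, b₁)) (inr (v₂, b₂)) = G.dist v₁ v₂ + 2 :=
          corona_dist_inr_inr_ne hG h12 _ _
        by_cases h31 : v₃ = v₁
        · subst h31
          have hd2 : (corona G H).dist (inr (v₃, b₃)) (inr (v₂, b₂)) = G.dist v₃ v₂ + 2 :=
            corona_dist_inr_inr_ne hG h12 _ _
          have p1 : 1 ≤ (corona G H).dist (inr (v₃, b₁)) (inr (v₃, b₃)) :=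
            hC.pos_dist_of_ne huw
          omega
        · by_cases h32 : v₃ = v₂
          · subst h32
            have hd2 : (corona G H).dist (inr (v₁, b₁)) (inr (v₃, b₃)) = G.dist v₁ v₃ + 2 :=
              corona_dist_inr_inr_ne hG h12 _ _
            have p2 : 1 ≤ (corona G H).dist (inr (v₃, b₃)) (inr (v₃, b₂)) :=
              hC.pos_dist_of_ne (Ne.symm hvw)
            omega
          · have hd1 : (corona G H).dist (inr (v₁, b₁)) (inr (v₃, b₃)) = G.dist v₁ v₃ + 2 :=
              corona_dist_inr_inr_ne hG (fun h => h31 h.symm) _ _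
            have hd2 : (corona G H).dist (inr (v₃, b₃)) (inr (v₂, b₂)) = G.dist v₃ v₂ + 2 :=
              corona_dist_inr_inr_ne hG h32 _ _
            have htri := hG.dist_triangle (u := v₁) (v := v₃) (w := v₂)
            omega
    apply le_csSup (gp_set_bddAbove _)
    refine ⟨(Sfin : Set (α ⊕ α × β)), hgp, ?_⟩
    rw [Set.ncard_coe_finset, hSfin,
      Finset.card_image_of_injective _ Sum.inr_injective, Finset.card_product,
      Finset.card_univ, hUcard]
    congr 1
    rw [hUf, ← Set.ncard_eq_toFinset_card U U.toFinite]

end Main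
end

section
/- Let n ≥ 6 be an integer and let S be a general position set of the Kneser graph K(n,2) such that the subgraph of K(n,2) induced by S has a connected component with at least 3 vertices. Then |S| ≤ ⌊n/2⌋. -/
/-- Let `n ≥ 6` and let `S` be a general position set of `K(n,2)` such that the
subgraph induced by `S` has a connected component with at least `3` vertices.
Then `|S| ≤ ⌊n/2⌋`. -/
theorem gpSet_kneser_two_component_ge_three (n : ℕ) (hn : 6 ≤ n)
    (S : Set {s : Finset (Fin n) // s.card = 2})
    (hS : (kneserGraph n 2).IsGPSet S)
    (hc : ∃ c : ((kneserGraph n 2).induce S).ConnectedComponent,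
      3 ≤ c.supp.ncard) :
    S.ncard ≤ n / 2 := by
  classical
  set G := kneserGraph n 2 with hG
  set H := G.induce S with hH
  -- Key: reachable distinct vertices in the induced graph are adjacent in G.
  have key : ∀ (u v : ↥S) (p : H.Walk u v), u ≠ v → G.Adj u.1 v.1 := by
    intro u v p
    induction p with
    | nil => intro h; exact absurd rfl h
    | @cons u x v h q ih =>
      intro huv
      have hux : G.Adj u.1 x.1 := h
      by_cases hxv : x = v
      · subst hxv; exact hux
      · have hxvA : G.Adj x.1 v.1 := ih hxv
        by_cases huvA : G.Adj u.1 v.1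
        · exact huvA
        · exfalso
          have hne_ux : u.1 ≠ x.1 := hux.ne
          have hne_xv : x.1 ≠ v.1 := hxvA.ne
          have hne_uv : u.1 ≠ v.1 := fun hh => huv (Subtype.ext hh)
          set p2 : G.Walk u.1 v.1 :=
            SimpleGraph.Walk.cons hux (SimpleGraph.Walk.cons hxvA SimpleGraph.Walk.nil) with hp2
          have hpath : p2.IsPath := by
            rw [SimpleGraph.Walk.isPath_def]
            simp [hp2, hne_ux, hne_xv, hne_uv]
          have hdle : G.dist u.1 v.1 ≤ 2 := by
            have := SimpleGraph.dist_le p2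
            simpa [hp2] using this
          have hd0 : G.dist u.1 v.1 ≠ 0 := by
            rw [Ne, SimpleGraph.dist_eq_zero_iff_eq_or_not_reachable]
            push_neg
            exact ⟨hne_uv, p2.reachable⟩
          have hd1 : G.dist u.1 v.1 ≠ 1 := by
            rw [Ne, SimpleGraph.dist_eq_one_iff_adj]
            exact huvA
          have hlen : p2.length = G.dist u.1 v.1 := by
            have : G.dist u.1 v.1 = 2 := by omega
            simp [hp2, this]
          have := hS u.2 v.2 x.2 hne_uv hne_ux (Ne.symm hne_xv) p2 hpath hlen
          apply this
          simp [hp2, SimpleGraph.Walk.support_cons]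
  obtain ⟨c, hc3⟩ := hc
  obtain ⟨t, hts, ht3⟩ := Set.exists_subset_card_eq hc3
  rw [Set.ncard_eq_three] at ht3
  obtain ⟨a, b, d, hab, had, hbd, rfl⟩ := ht3
  have ha : a ∈ c.supp := hts (by simp)
  have hb : b ∈ c.supp := hts (by simp)
  have hd : d ∈ c.supp := hts (by simp)
  have reach : ∀ x y : ↥S, x ∈ c.supp → y ∈ c.supp → x ≠ y → G.Adj x.1 y.1 := by
    intro x y hx hy hxy
    rw [SimpleGraph.ConnectedComponent.mem_supp_iff] at hx hy
    obtain ⟨p⟩ := SimpleGraph.ConnectedComponent.exact (hx.trans hy.symm)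
    exact key x y p hxy
  -- every element of S is in c.supp
  have hall : ∀ x : ↥S, x ∈ c.supp := by
    intro x
    by_contra hx
    have hne : ∀ y : ↥S, y ∈ c.supp → ¬ H.Adj x y := by
      intro y hy hadj
      apply hx
      rw [SimpleGraph.ConnectedComponent.mem_supp_iff] at hy ⊢
      rw [← hy]
      exact SimpleGraph.ConnectedComponent.sound hadj.reachable
    have hint : ∀ y : ↥S, y ∈ c.supp → ¬ Disjoint x.1.1 y.1.1 := by
      intro y hy hdisj
      have hxy : x ≠ y := fun hh => hx (hh ▸ hy)
      exact hne y hy ⟨hdisj, fun hh => hxy (Subtype.ext hh)⟩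
    obtain ⟨pa, hpa1, hpa2⟩ := Finset.not_disjoint_iff.mp (hint a ha)
    obtain ⟨pb, hpb1, hpb2⟩ := Finset.not_disjoint_iff.mp (hint b hb)
    obtain ⟨pd, hpd1, hpd2⟩ := Finset.not_disjoint_iff.mp (hint d hd)
    have dab : Disjoint a.1.1 b.1.1 := (reach a b ha hb hab).1
    have dad : Disjoint a.1.1 d.1.1 := (reach a d ha hd had).1
    have dbd : Disjoint b.1.1 d.1.1 := (reach b d hb hd hbd).1
    have h1 : pa ≠ pb := fun hh => (Finset.disjoint_left.mp dab) hpa2 (hh ▸ hpb2)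
    have h2 : pa ≠ pd := fun hh => (Finset.disjoint_left.mp dad) hpa2 (hh ▸ hpd2)
    have h3 : pb ≠ pd := fun hh => (Finset.disjoint_left.mp dbd) hpb2 (hh ▸ hpd2)
    have hsub : ({pa, pb, pd} : Finset (Fin n)) ⊆ x.1.1 := by
      intro z hz
      simp only [Finset.mem_insert, Finset.mem_singleton] at hz
      rcases hz with rfl | rfl | rfl <;> assumption
    have := Finset.card_le_card hsub
    rw [x.1.2] at this
    rw [Finset.card_insert_of_notMem (by simp [h1, h2]),
      Finset.card_insert_of_notMem (by simp [h3]), Finset.card_singleton] at this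
    omega
  -- pairwise disjointness on S
  have hpw : ∀ x ∈ S, ∀ y ∈ S, x ≠ y → Disjoint x.1 y.1 := by
    intro x hx y hy hxy
    exact (reach ⟨x, hx⟩ ⟨y, hy⟩ (hall _) (hall _)
      (fun hh => hxy (congrArg Subtype.val hh))).1
  -- counting
  have hfin : S.Finite := Set.toFinite S
  set T := hfin.toFinset with hT
  have hpwT : ∀ x ∈ T, ∀ y ∈ T, x ≠ y → Disjoint x.1 y.1 := by
    intro x hx y hy
    exact hpw x (hfin.mem_toFinset.mp hx) y (hfin.mem_toFinset.mp hy)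
  have hcard : (T.biUnion fun x => x.1).card = 2 * T.card := by
    rw [Finset.card_biUnion hpwT]
    rw [Finset.sum_congr rfl fun x _ => x.2]
    simp [mul_comm]
  have hle : (T.biUnion fun x => x.1).card ≤ n := by
    have := Finset.card_le_card (Finset.subset_univ (T.biUnion fun x => x.1))
    simpa using this
  have hTS : S.ncard = T.card := Set.ncard_eq_toFinset_card S hfin
  omega
end

section
/- Let n ≥ 6 be an integer and let S be a general position set of the Kneser graph K(n,2) such that the subgraph of K(n,2) induced by S has a connected component with exactly 2 vertices (a component isomorphic to K_2). Then |S| ≤ 6. -/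
/-- Let `n ≥ 6` and let `S` be a general position set of `K(n,2)` such that the
subgraph induced by `S` has a connected component with exactly `2` vertices
(a component isomorphic to `K₂`). Then `|S| ≤ 6`. -/
theorem gpSet_kneser_two_component_eq_two (n : ℕ) (hn : 6 ≤ n)
    (S : Set {s : Finset (Fin n) // s.card = 2})
    (hS : (kneserGraph n 2).IsGPSet S)
    (hc : ∃ c : ((kneserGraph n 2).induce S).ConnectedComponent,
      c.supp.ncard = 2) :
    S.ncard ≤ 6 := by
  classical
  obtain ⟨c, hc2⟩ := hc
  rw [Set.ncard_eq_two] at hc2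
  obtain ⟨a, b, hab, hsupp⟩ := hc2
  have ha : a ∈ c.supp := by rw [hsupp]; exact Set.mem_insert _ _
  have hb : b ∈ c.supp := by rw [hsupp]; exact Set.mem_insert_iff.2 (Or.inr rfl)
  have key : ∀ x : ↥S, ((kneserGraph n 2).induce S).Reachable x a → x = a ∨ x = b := by
    intro x hx
    have hx' : x ∈ c.supp := by
      rw [SimpleGraph.ConnectedComponent.mem_supp_iff,
        SimpleGraph.ConnectedComponent.sound hx,
        ← SimpleGraph.ConnectedComponent.mem_supp_iff]
      exact ha
    rw [hsupp] at hx'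
    exact hx'
  have hreach : ((kneserGraph n 2).induce S).Reachable a b :=
    SimpleGraph.ConnectedComponent.exact (by
      rw [(SimpleGraph.ConnectedComponent.mem_supp_iff _ _).1 ha,
        (SimpleGraph.ConnectedComponent.mem_supp_iff _ _).1 hb])
  have hadj : (kneserGraph n 2).Adj a.1 b.1 := by
    obtain ⟨p⟩ := hreach
    cases p with
    | nil => exact absurd rfl hab
    | cons h q =>
      rename_i x
      rcases key x h.reachable.symm with h1 | h1
      · exact absurd h1.symm h.ne
      · subst h1
        exact SimpleGraph.comap_adj.1 h
  have hdisj : Disjoint a.1.1 b.1.1 := hadj.1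
  have hmem : ∀ C ∈ S, C.1 ⊆ a.1.1 ∪ b.1.1 := by
    intro C hC
    by_cases hCa : C = a.1
    · subst hCa; exact Finset.subset_union_left
    by_cases hCb : C = b.1
    · subst hCb; exact Finset.subset_union_right
    have hnr : ∀ D : ↥S, ((kneserGraph n 2).induce S).Reachable ⟨C, hC⟩ a →
        False := by
      intro _ hr
      rcases key ⟨C, hC⟩ hr with h1 | h1
      · exact hCa (congrArg Subtype.val h1)
      · exact hCb (congrArg Subtype.val h1)
    have hna : ¬ Disjoint C.1 a.1.1 := by
      intro hd
      have hadjCa : ((kneserGraph n 2).induce S).Adj ⟨C, hC⟩ a :=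
        SimpleGraph.comap_adj.2 ⟨hd, hCa⟩
      exact hnr a hadjCa.reachable
    have hnb : ¬ Disjoint C.1 b.1.1 := by
      intro hd
      have hadjCb : ((kneserGraph n 2).induce S).Adj ⟨C, hC⟩ b :=
        SimpleGraph.comap_adj.2 ⟨hd, hCb⟩
      exact hnr a (hadjCb.reachable.trans hreach.symm)
    obtain ⟨p, hpC, hpA⟩ := Finset.not_disjoint_iff.1 hna
    obtain ⟨q, hqC, hqB⟩ := Finset.not_disjoint_iff.1 hnb
    have hpq : p ≠ q := fun h => (Finset.disjoint_left.1 hdisj) hpA (h ▸ hqB)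
    have hset : ({p, q} : Finset (Fin n)) ⊆ C.1 := by
      intro z hz
      rcases Finset.mem_insert.1 hz with rfl | hz
      · exact hpC
      · rw [Finset.mem_singleton.1 hz]; exact hqC
    have hcard2 : ({p, q} : Finset (Fin n)).card = 2 := by
      rw [Finset.card_insert_of_notMem (by simpa using hpq), Finset.card_singleton]
    have hCeq : ({p, q} : Finset (Fin n)) = C.1 :=
      Finset.eq_of_subset_of_card_le hset (by rw [C.2, hcard2])
    rw [← hCeq]
    intro z hz
    rcases Finset.mem_insert.1 hz with rfl | hz
    · exact Finset.mem_union_left _ hpA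
    · rw [Finset.mem_singleton.1 hz]; exact Finset.mem_union_right _ hqB
  have hun : (a.1.1 ∪ b.1.1).card = 4 := by
    rw [Finset.card_union_of_disjoint hdisj, a.1.2, b.1.2]
  have hsub : (Subtype.val '' S : Set (Finset (Fin n))) ⊆
      ↑(Finset.powersetCard 2 (a.1.1 ∪ b.1.1)) := by
    rintro s ⟨C, hCS, rfl⟩
    simp only [Finset.mem_coe, Finset.mem_powersetCard]
    exact ⟨hmem C hCS, C.2⟩
  calc S.ncard = (Subtype.val '' S).ncard :=
        (Set.ncard_image_of_injective S Subtype.val_injective).symm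
    _ ≤ (↑(Finset.powersetCard 2 (a.1.1 ∪ b.1.1)) :
          Set (Finset (Fin n))).ncard :=
        Set.ncard_le_ncard hsub (Finset.finite_toSet _)
    _ = (Finset.powersetCard 2 (a.1.1 ∪ b.1.1)).card :=
        Set.ncard_coe_finset _
    _ = 6 := by rw [Finset.card_powersetCard, hun]; decide
end
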